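/- arXiv:1509.05586 — 4 statements merged into one kernel-verified Lean document; each statement's English description precedes it below -/
import Mathlib

section
/- Let G be a 2-connected bipartite graph and H a 2-connected subgraph of G that has an odd ear in G. Then every vertex of G belongs to an odd theta subgraph of G. -/
open SimpleGraph

variable {V : Type*}

/-- A graph is 2-connected: connected, at least 3 vertices, and deleting any
vertex keeps it connected. -/
def TwoConnected (G : SimpleGraph V) : Prop :=
  G.Connected ∧ 3 ≤ Nat.card V ∧
    ∀ v : V, ((⊤ : G.Subgraph).deleteVerts {v}).coe.Connected

/-- A graph is non-bipartite iff it has an odd circuit. -/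
def HasOddCircuit (G : SimpleGraph V) : Prop :=
  ∃ (u : V) (c : G.Walk u u), c.IsCycle ∧ Odd c.length

/-- `G` contains a totally odd subdivision of `C3+` (triangle with a doubled
edge): equivalently, the union of an odd circuit and an odd path having exactly
its two distinct endpoints on the circuit. -/
def ContainsOddC3Plus (G : SimpleGraph V) : Prop :=
  ∃ (x : V) (c : G.Walk x x) (a b : V) (p : G.Walk a b),
    c.IsCycle ∧ Odd c.length ∧ p.IsPath ∧ Odd p.length ∧ a ≠ b ∧
    a ∈ c.support ∧ b ∈ c.support ∧
    ∀ w ∈ p.support, w ∈ c.support → w = a ∨ w = b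

section Space
variable [Fintype V] [DecidableEq V]

/-- `C` is the edge set of a circuit of `G`. -/
def IsCircuitSet (G : SimpleGraph V) (C : Finset (Sym2 V)) : Prop :=
  ∃ (u : V) (c : G.Walk u u), c.IsCycle ∧ C = c.edges.toFinset

/-- incidence vector over `𝔽₂` of a set of edges -/
def edgeInd (C : Finset (Sym2 V)) : Sym2 V → ZMod 2 :=
  fun e => if e ∈ C then 1 else 0

/-- the cycle space of `G`: the `𝔽₂`-span of incidence vectors of circuits -/
def cycleSpace (G : SimpleGraph V) : Submodule (ZMod 2) (Sym2 V → ZMod 2) :=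
  Submodule.span (ZMod 2) {x | ∃ C, IsCircuitSet G C ∧ x = edgeInd C}

/-- `C` is a cycle of `G` (an element of the cycle space). -/
def IsCycleSet (G : SimpleGraph V) (C : Finset (Sym2 V)) : Prop :=
  edgeInd C ∈ cycleSpace G

/-- `B` is a cycle basis of `G`: a family of cycles whose incidence vectors
form a basis of the cycle space. -/
def IsCycleBasis (G : SimpleGraph V) (B : Finset (Finset (Sym2 V))) : Prop :=
  (∀ C ∈ B, IsCycleSet G C) ∧
  LinearIndependent (ZMod 2) (fun C : B => edgeInd C.1) ∧
  Submodule.span (ZMod 2) (edgeInd '' (B : Set (Finset (Sym2 V)))) = cycleSpace G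

end Space

/-- data of a potential ear: two endpoints and a walk between them -/
abbrev EarData (G : SimpleGraph V) := Σ a : V, Σ b : V, G.Walk a b

/-- the union of a base circuit and a list of ears, as a subgraph -/
def earsUnion {G : SimpleGraph V} {x : V} (base : G.Walk x x)
    (ears : List (EarData G)) : G.Subgraph :=
  ears.foldl (fun H e => H ⊔ e.2.2.toSubgraph) base.toSubgraph

/-- `e` is an ear of the subgraph `H`: a path with exactly its two distinct
endpoints in `H`, all edges new. -/
def IsEar {G : SimpleGraph V} (H : G.Subgraph) (e : EarData G) : Prop :=
  e.2.2.IsPath ∧ e.1 ≠ e.2.1 ∧ e.1 ∈ H.verts ∧ e.2.1 ∈ H.verts ∧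
  (∀ v ∈ e.2.2.support, v ≠ e.1 → v ≠ e.2.1 → v ∉ H.verts) ∧
  ∀ ed ∈ e.2.2.edges, ed ∉ H.edgeSet

/-- an (open) ear-decomposition of `G` -/
structure EarDecomposition (G : SimpleGraph V) where
  x : V
  base : G.Walk x x
  base_cycle : base.IsCycle
  ears : List (EarData G)
  ear_cond : ∀ i (h : i < ears.length),
    IsEar (earsUnion base (ears.take i)) (ears.get ⟨i, h⟩)
  union_top : earsUnion base ears = ⊤

/-- an ear-decomposition is odd if the base circuit and all ears are odd -/
def EarDecomposition.IsOdd {G : SimpleGraph V} (ed : EarDecomposition G) : Prop :=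
  Odd ed.base.length ∧ ∀ e ∈ ed.ears, Odd e.2.2.length

/-- `G` is a totally odd subdivision of `K₄`. -/
def IsTotallyOddK4 (G : SimpleGraph V) : Prop :=
  ∃ (b : Fin 4 → V) (p : ∀ i j : Fin 4, i < j → G.Walk (b i) (b j)),
    Function.Injective b ∧
    (∀ i j h, (p i j h).IsPath ∧ Odd (p i j h).length) ∧
    (∀ i j h i' j' h', (i, j) ≠ (i', j') →
      ∀ v ∈ (p i j h).support, v ∈ (p i' j' h').support →
        (v = b i ∨ v = b j) ∧ (v = b i' ∨ v = b j')) ∧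
    (⨆ i, ⨆ j, ⨆ h : i < j, (p i j h).toSubgraph) = ⊤

/-- `G` contains a totally odd subdivision of `K₄` as a subgraph. -/
def ContainsTotallyOddK4 (G : SimpleGraph V) : Prop :=
  ∃ (b : Fin 4 → V) (p : ∀ i j : Fin 4, i < j → G.Walk (b i) (b j)),
    Function.Injective b ∧
    (∀ i j h, (p i j h).IsPath ∧ Odd (p i j h).length) ∧
    (∀ i j h i' j' h', (i, j) ≠ (i', j') →
      ∀ v ∈ (p i j h).support, v ∈ (p i' j' h').support →
        (v = b i ∨ v = b j) ∧ (v = b i' ∨ v = b j'))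

/-- `G` contains an odd theta subgraph through the vertex `w`: three pairwise
internally disjoint and edge-disjoint odd paths with the same distinct ends,
one of them passing through `w`. -/
def ContainsOddThetaThrough (G : SimpleGraph V) (w : V) : Prop :=
  ∃ (x y : V) (p1 p2 p3 : G.Walk x y), x ≠ y ∧
    p1.IsPath ∧ p2.IsPath ∧ p3.IsPath ∧
    Odd p1.length ∧ Odd p2.length ∧ Odd p3.length ∧
    (∀ v ∈ p1.support, v ∈ p2.support → v = x ∨ v = y) ∧
    (∀ v ∈ p1.support, v ∈ p3.support → v = x ∨ v = y) ∧
    (∀ v ∈ p2.support, v ∈ p3.support → v = x ∨ v = y) ∧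
    (∀ e ∈ p1.edges, e ∉ p2.edges) ∧
    (∀ e ∈ p1.edges, e ∉ p3.edges) ∧
    (∀ e ∈ p2.edges, e ∉ p3.edges) ∧
    (w ∈ p1.support ∨ w ∈ p2.support ∨ w ∈ p3.support)

/-- a graph is factor-critical if deleting any vertex leaves a graph with a
perfect matching -/
def FactorCritical {W : Type*} (H : SimpleGraph W) : Prop :=
  ∀ v : W, ∃ M : ((⊤ : H.Subgraph).deleteVerts {v}).coe.Subgraph,
    M.IsPerfectMatching

namespace ThetaAux

set_option linter.unusedSectionVars false

variable {W : Type*} [DecidableEq W] {Γ : SimpleGraph W}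




/-- appending two paths that share only the junction vertex gives a path -/
lemma isPath_append {a b c : W} {p : Γ.Walk a b} {q : Γ.Walk b c}
    (hp : p.IsPath) (hq : q.IsPath)
    (h : ∀ z, z ∈ p.support → z ∈ q.support → z = b) : (p.append q).IsPath := by
  induction p with
  | nil => simpa using hq
  | @cons a a' b ha p ih =>
    rw [Walk.cons_append]
    rw [Walk.cons_isPath_iff] at hp ⊢
    refine ⟨ih hp.1 hq (fun z hz hz' => h z (by simp [hz]) hz'), ?_⟩
    rw [Walk.mem_support_append_iff]
    rintro (hc | hc)
    · exact hp.2 hc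
    · have := h a (by simp) hc
      subst this
      exact hp.2 p.end_mem_support

lemma two_le_length_of_mem {a b w : W} {p : Γ.Walk a b}
    (hw : w ∈ p.support) (hwa : w ≠ a) (hwb : w ≠ b) : 2 ≤ p.length := by
  cases p with
  | nil => simp at hw; exact absurd hw hwa
  | cons h q =>
    cases q with
    | nil =>
      simp at hw
      rcases hw with rfl | rfl
      exacts [absurd rfl hwa, absurd rfl hwb]
    | cons h' q' => simp [Walk.length_cons]

lemma path_length_one_of_edge {x y : W} {p : Γ.Walk x y} (hp : p.IsPath)
    (he : s(x, y) ∈ p.edges) : p.length = 1 := by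
  induction p with
  | nil => simp at he
  | @cons x x' y h q ih =>
    rw [Walk.edges_cons, List.mem_cons] at he
    rcases he with he | he
    · rw [Sym2.eq_iff] at he
      rcases he with ⟨-, rfl⟩ | ⟨rfl, -⟩
      · have : q = Walk.nil := by
          rw [← Walk.isPath_iff_eq_nil]; exact hp.of_cons
        subst this; simp
      · exact absurd rfl h.ne
    · exfalso
      rw [Walk.cons_isPath_iff] at hp
      exact hp.2 (q.fst_mem_support_of_mem_edges he)

lemma edges_disjoint_of_internal {x y : W} {p q : Γ.Walk x y} (hxy : x ≠ y)
    (hp : p.IsPath) (hq : q.IsPath)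
    (h : ∀ z, z ∈ p.support → z ∈ q.support → z = x ∨ z = y)
    (hne : ¬(p.length = 1 ∧ q.length = 1)) :
    ∀ e ∈ p.edges, e ∉ q.edges := by
  intro e hep heq
  induction e with
  | _ c d =>
    have hcp := p.fst_mem_support_of_mem_edges hep
    have hdp := p.snd_mem_support_of_mem_edges hep
    have hcq := q.fst_mem_support_of_mem_edges heq
    have hdq := q.snd_mem_support_of_mem_edges heq
    have hcd : c ≠ d := (p.adj_of_mem_edges hep).ne
    have hc := h c hcp hcq
    have hd := h d hdp hdq
    have hexy : s(c, d) = s(x, y) := by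
      rcases hc with rfl | rfl <;> rcases hd with rfl | rfl <;>
        first | exact absurd rfl hcd | simp [Sym2.eq_swap]
    rw [hexy] at hep heq
    exact hne ⟨path_length_one_of_edge hp hep, path_length_one_of_edge hq heq⟩





lemma take_drop_disj {x y u : W} {p : Γ.Walk x y} (hp : p.IsPath) (hu : u ∈ p.support) :
    ∀ z, z ∈ (p.takeUntil u hu).support → z ∈ (p.dropUntil u hu).support.tail → False := by
  have hnd : p.support.Nodup := hp.support_nodup
  conv at hnd => rw [← p.take_spec hu]
  rw [Walk.support_append] at hnd
  rw [List.nodup_append] at hnd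
  exact fun z h1 h2 => hnd.2.2 z h1 z h2 rfl

lemma mem_takeUntil_mem_dropUntil {x y u : W} {p : Γ.Walk x y} (hp : p.IsPath)
    (hu : u ∈ p.support) :
    ∀ z, z ∈ (p.takeUntil u hu).support → z ∈ (p.dropUntil u hu).support → z = u := by
  intro z h1 h2
  rw [(p.dropUntil u hu).support_eq_cons, List.mem_cons] at h2
  rcases h2 with rfl | h2
  · rfl
  · exact absurd h2 (fun h2 => take_drop_disj hp hu z h1 h2)

lemma not_mem_takeUntil {x y u : W} {p : Γ.Walk x y} (hp : p.IsPath) (hu : u ∈ p.support)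
    (hne : u ≠ y) : y ∉ (p.takeUntil u hu).support := fun hy =>
  hne (mem_takeUntil_mem_dropUntil hp hu y hy (p.dropUntil u hu).end_mem_support).symm

lemma not_mem_dropUntil {x y u : W} {p : Γ.Walk x y} (hp : p.IsPath) (hu : u ∈ p.support)
    (hne : u ≠ x) : x ∉ (p.dropUntil u hu).support := fun hx =>
  hne (mem_takeUntil_mem_dropUntil hp hu x (p.takeUntil u hu).start_mem_support hx).symm

lemma mem_dropUntil_of_not_mem_takeUntil {x y u v : W} {p : Γ.Walk x y}
    (hu : u ∈ p.support) (hv : v ∈ p.support) (hvt : v ∉ (p.takeUntil u hu).support) :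
    v ∈ (p.dropUntil u hu).support := by
  conv at hv => rw [← p.take_spec hu]
  rw [Walk.mem_support_append_iff] at hv
  tauto

/-- an odd closed walk yields an odd cycle -/
lemma hasOddCircuit_of_odd_closed :
    ∀ (n : ℕ) (u : W) (c : Γ.Walk u u), c.length = n → Odd c.length → HasOddCircuit Γ := by
  intro n
  induction n using Nat.strong_induction_on with
  | _ n ih =>
    intro u c hn hodd
    cases c with
    | nil => simp at hodd
    | @cons u v _ h q =>
      by_cases hnd : q.support.Nodup
      · have hq : q.IsPath := Walk.IsPath.mk' hnd
        by_cases he : s(u, v) ∈ q.edges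
        · exfalso
          have h1 : q.length = 1 := by
            apply path_length_one_of_edge hq
            rwa [Sym2.eq_swap]
          rw [Walk.length_cons, h1] at hodd
          simp [Nat.odd_iff] at hodd
        · exact ⟨u, Walk.cons h q, (Walk.cons_isCycle_iff q h).2 ⟨hq, he⟩, hodd⟩
      · -- there is a repeated vertex in q.support; split the closed walk
        rw [← List.exists_duplicate_iff_not_nodup] at hnd
        obtain ⟨z, hz⟩ := hnd
        have hz2 : 2 ≤ q.support.count z := List.duplicate_iff_two_le_count.mp hz
        have hzc : z ∈ (Walk.cons h q).support := by
          simp [Walk.support_cons]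
          right; exact hz.mem
        set c := Walk.cons h q with hc
        have hlen : (c.rotate z hzc).length = c.length := by
          have h2 := congrArg Walk.length (Walk.take_spec c hzc)
          rw [Walk.length_append] at h2
          unfold Walk.rotate
          rw [Walk.length_append]
          omega
        have hcount : (c.rotate z hzc).support.tail.count z = c.support.tail.count z := by
          exact ((Walk.support_rotate c z hzc).perm.count_eq z)
        have hodd' : Odd (c.rotate z hzc).length := by rwa [hlen]
        have hlen' : (c.rotate z hzc).length = n := by rw [hlen, ← hn]
        -- now analyze the rotated walk
        rcases hrot : c.rotate z hzc with _ | ⟨h₂, q₂⟩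
        · rw [hrot] at hodd'; simp at hodd'
        · rw [hrot] at hodd' hlen' hcount
          have hcount' : q₂.support.count z = q.support.count z := by
            simpa [hc, Walk.support_cons] using hcount
          have hzq : z ∈ q₂.support := by
            have : 2 ≤ q₂.support.count z := by omega
            exact List.count_pos_iff.mp (by omega)
          set t := q₂.takeUntil z hzq with ht
          set d := q₂.dropUntil z hzq with hd
          have hct : (t.support.count z) = 1 := q₂.count_support_takeUntil_eq_one hzq
          have hsplit : q₂.support = t.support ++ d.support.tail := by
            rw [← Walk.support_append, Walk.take_spec]
          have hdnn : 1 ≤ d.support.tail.count z := by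
            have : q₂.support.count z = t.support.count z + d.support.tail.count z := by
              rw [hsplit, List.count_append]
            simp [Walk.support_cons] at hcount
            omega
          have hdne : 0 < d.length := by
            rcases Nat.eq_zero_or_pos d.length with h0 | h0
            · exfalso
              have : d.support.tail = [] := by
                have := Walk.support_eq_cons d
                have hl : d.support.length = d.length + 1 := by
                  simp [Walk.length_support]
                rw [h0] at hl
                cases hds : d.support with
                | nil => simp [hds] at hl
                | cons a l => rw [hds] at hl; simp at hl; simpa [hds] using hl
              rw [this] at hdnn; simp at hdnn
            · exact h0
          have hlsum : (1 + t.length) + d.length = n := by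
            have : t.length + d.length = q₂.length := by
              rw [← Walk.length_append, Walk.take_spec]
            simp [Walk.length_cons] at hlen'
            omega
          have hN : Odd n := hlen' ▸ hodd'
          have : Odd (1 + t.length) ∨ Odd d.length := by
            rw [Nat.odd_iff] at hN ⊢
            rw [Nat.odd_iff]
            omega
          rcases this with ho | ho
          · exact ih (1 + t.length) (by omega) _ (Walk.cons h₂ t) (by simp [Walk.length_cons]; omega) (by simpa [Walk.length_cons, Nat.add_comm] using ho)
          · exact ih d.length (by omega) _ d rfl ho


lemma walk_parity (hbip : ¬ HasOddCircuit Γ) {a b : W} (p q : Γ.Walk a b) :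
    Odd p.length ↔ Odd q.length := by
  have hcl : ¬ Odd (p.append q.reverse).length := fun h =>
    hbip (hasOddCircuit_of_odd_closed _ _ _ rfl h)
  rw [Walk.length_append, Walk.length_reverse, Nat.not_odd_iff_even, Nat.even_iff] at hcl
  rw [Nat.odd_iff, Nat.odd_iff]
  omega

lemma exists_path_avoiding {v u1 u2 : W}
    (hv : ((⊤ : Γ.Subgraph).deleteVerts {v}).coe.Connected)
    (h1 : u1 ≠ v) (h2 : u2 ≠ v) :
    ∃ p : Γ.Walk u1 u2, p.IsPath ∧ v ∉ p.support := by
  have m1 : u1 ∈ ((⊤ : Γ.Subgraph).deleteVerts {v}).verts := by simp [h1]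
  have m2 : u2 ∈ ((⊤ : Γ.Subgraph).deleteVerts {v}).verts := by simp [h2]
  obtain ⟨wk⟩ := hv.preconnected ⟨u1, m1⟩ ⟨u2, m2⟩
  let wk' : Γ.Walk u1 u2 := wk.map (SimpleGraph.Subgraph.hom _)
  refine ⟨wk'.bypass, wk'.bypass_isPath, fun hvmem => ?_⟩
  have hmem := Walk.support_bypass_subset wk' hvmem
  change v ∈ (wk.map (SimpleGraph.Subgraph.hom _)).support at hmem
  rw [Walk.support_map] at hmem
  obtain ⟨s, _, hsv⟩ := List.mem_map.mp hmem
  have hs2 := s.2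
  simp only [Subgraph.deleteVerts_verts, Subgraph.verts_top, Set.mem_diff,
    Set.mem_singleton_iff] at hs2
  exact hs2.2 (by simpa using hsv)

lemma exists_third (hcard : 3 ≤ Nat.card W) (a b : W) : ∃ c : W, c ≠ a ∧ c ≠ b := by
  by_contra h
  push_neg at h
  have hsub : (Set.univ : Set W) ⊆ {a, b} := by
    intro c _
    by_cases hc : c = a
    · simp [hc]
    · simp [h c hc]
  have h1 : (Set.univ : Set W).ncard = Nat.card W := Set.ncard_univ W
  have h2 : (Set.univ : Set W).ncard ≤ ({a, b} : Set W).ncard :=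
    Set.ncard_le_ncard hsub (Set.toFinite _)
  have h3 : ({a, b} : Set W).ncard ≤ 2 := by
    have := Set.ncard_insert_le a ({b} : Set W)
    simpa using this
  omega

lemma exists_second_path (hcard : 3 ≤ Nat.card W)
    (hdel : ∀ v : W, ((⊤ : Γ.Subgraph).deleteVerts {v}).coe.Connected)
    {a b : W} (hadj : Γ.Adj a b) :
    ∃ q : Γ.Walk a b, q.IsPath ∧ s(a, b) ∉ q.edges := by
  obtain ⟨c, hca, hcb⟩ := exists_third hcard a b
  obtain ⟨p1, _, hb1⟩ := exists_path_avoiding (Γ := Γ) (hdel b) hcb hadj.ne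
  obtain ⟨p2, _, ha2⟩ := exists_path_avoiding (Γ := Γ) (hdel a) hca hadj.ne'
  let q0 : Γ.Walk a b := p1.reverse.append p2
  have hq0 : s(a, b) ∉ q0.edges := by
    intro hmem
    rw [Walk.edges_append, List.mem_append, Walk.edges_reverse, List.mem_reverse] at hmem
    rcases hmem with hmem | hmem
    · exact hb1 (p1.snd_mem_support_of_mem_edges hmem)
    · exact ha2 (p2.fst_mem_support_of_mem_edges hmem)
  exact ⟨q0.bypass, q0.bypass_isPath, fun h => hq0 (q0.edges_bypass_subset h)⟩

lemma firstHit (S : Set W) :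
    ∀ {b a : W} (p : Γ.Walk b a), p.IsPath → a ∈ S →
    ∃ (z : W) (R : Γ.Walk b z), R.IsPath ∧ z ∈ S ∧ (∀ y ∈ R.support, y ∈ S → y = z) ∧
      (∀ y ∈ R.support, y ∈ p.support) := by
  intro b a p
  induction p with
  | nil =>
    intro _ ha
    exact ⟨_, Walk.nil, by simp, ha, fun y hy _ => by simpa using hy, fun y hy => hy⟩
  | @cons b b' a h q ih =>
    intro hp ha
    by_cases hbS : b ∈ S
    · refine ⟨b, Walk.nil, by simp, hbS, fun y hy _ => by simpa using hy, fun y hy => ?_⟩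
      simp at hy
      simp [hy]
    · obtain ⟨z, R', hR'p, hzS, hRS, hRsub⟩ := ih hp.of_cons ha
      refine ⟨z, Walk.cons h R', ?_, hzS, ?_, ?_⟩
      · rw [Walk.cons_isPath_iff]
        refine ⟨hR'p, fun hc => ?_⟩
        have := hRsub b hc
        rw [Walk.cons_isPath_iff] at hp
        exact hp.2 this
      · intro y hy hyS
        rw [Walk.support_cons, List.mem_cons] at hy
        rcases hy with rfl | hy
        · exact absurd hyS hbS
        · exact hRS y hy hyS
      · intro y hy
        rw [Walk.support_cons, List.mem_cons] at hy
        rw [Walk.support_cons, List.mem_cons]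
        rcases hy with rfl | hy
        · exact Or.inl rfl
        · exact Or.inr (hRsub y hy)

def TwoDisjPaths (Γ : SimpleGraph W) (a b : W) : Prop :=
  ∃ p q : Γ.Walk a b, p.IsPath ∧ q.IsPath ∧
    (∀ z ∈ p.support, z ∈ q.support → z = a ∨ z = b) ∧
    (∀ e ∈ p.edges, e ∉ q.edges)

lemma edges_take_drop_disj {x y u : W} {p : Γ.Walk x y} (hp : p.IsPath) (hu : u ∈ p.support) :
    ∀ e ∈ (p.takeUntil u hu).edges, e ∉ (p.dropUntil u hu).edges := by
  have hnd := Walk.edges_nodup_of_support_nodup hp.support_nodup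
  conv at hnd => rw [← p.take_spec hu]
  rw [Walk.edges_append, List.nodup_append] at hnd
  exact fun e h1 h2 => hnd.2.2 e h1 e h2 rfl

lemma absorb {a t b : W} {P1 P2 : Γ.Walk a t} (hP1 : P1.IsPath) (hP2 : P2.IsPath)
    (hd : ∀ z ∈ P1.support, z ∈ P2.support → z = a ∨ z = t)
    (he : ∀ e ∈ P1.edges, e ∉ P2.edges)
    (hb1 : b ∈ P1.support) (hba : b ≠ a) (hbt : b ≠ t) :
    TwoDisjPaths Γ a b := by
  set A := P1.takeUntil b hb1 with hA
  set drop := P1.dropUntil b hb1 with hdrop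
  have hAp : A.IsPath := hP1.takeUntil hb1
  have hdropp : drop.IsPath := hP1.dropUntil hb1
  have htA : t ∉ A.support := not_mem_takeUntil hP1 hb1 hbt
  have haD : a ∉ drop.support := not_mem_dropUntil hP1 hb1 hba
  have hBp : (P2.append drop.reverse).IsPath := by
    apply isPath_append hP2 hdropp.reverse
    intro z hz2 hzd
    rw [Walk.support_reverse, List.mem_reverse] at hzd
    have := hd z (P1.support_dropUntil_subset hb1 hzd) hz2
    rcases this with rfl | rfl
    · exact absurd hzd haD
    · rfl
  refine ⟨A, P2.append drop.reverse, hAp, hBp, ?_, ?_⟩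
  · intro z hzA hzB
    rw [Walk.mem_support_append_iff] at hzB
    rcases hzB with hz2 | hzd
    · have := hd z (P1.support_takeUntil_subset hb1 hzA) hz2
      rcases this with rfl | rfl
      · exact Or.inl rfl
      · exact absurd hzA htA
    · rw [Walk.support_reverse, List.mem_reverse] at hzd
      exact Or.inr (mem_takeUntil_mem_dropUntil hP1 hb1 z hzA hzd)
  · intro e heA heB
    rw [Walk.edges_append, List.mem_append, Walk.edges_reverse, List.mem_reverse] at heB
    rcases heB with he2 | hed
    · exact he e (P1.edges_takeUntil_subset hb1 heA) he2
    · exact edges_take_drop_disj hP1 hb1 e heA hed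

lemma reroute {a t b z : W} {P1 P2 : Γ.Walk a t} {R : Γ.Walk b z}
    (hP1 : P1.IsPath) (hP2 : P2.IsPath)
    (hd : ∀ y ∈ P1.support, y ∈ P2.support → y = a ∨ y = t)
    (he : ∀ e ∈ P1.edges, e ∉ P2.edges)
    (htb : Γ.Adj t b) (hb1 : b ∉ P1.support) (hb2 : b ∉ P2.support)
    (hR : R.IsPath) (hz1 : z ∈ P1.support)
    (hRC : ∀ y ∈ R.support, (y ∈ P1.support ∨ y ∈ P2.support) → y = z)
    (hzt : z ≠ t) :
    TwoDisjPaths Γ a b := by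
  have htb' : t ≠ b := htb.ne
  set T1 := P1.takeUntil z hz1 with hT1
  have hT1p : T1.IsPath := hP1.takeUntil hz1
  have htT1 : t ∉ T1.support := not_mem_takeUntil hP1 hz1 hzt
  have htR : t ∉ R.support := fun hc => hzt ((hRC t hc (Or.inl P1.end_mem_support)).symm)
  have hAp : (T1.append R.reverse).IsPath := by
    apply isPath_append hT1p hR.reverse
    intro y hy1 hy2
    rw [Walk.support_reverse, List.mem_reverse] at hy2
    exact hRC y hy2 (Or.inl (P1.support_takeUntil_subset hz1 hy1))
  have hsep : (Walk.cons htb (Walk.nil : Γ.Walk b b)).IsPath := by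
    rw [Walk.cons_isPath_iff]
    exact ⟨Walk.IsPath.nil, by simpa using htb'⟩
  have hBp : (P2.append (Walk.cons htb Walk.nil)).IsPath := by
    apply isPath_append hP2 hsep
    intro y hy2 hyc
    simp only [Walk.support_cons, Walk.support_nil, List.mem_cons,
      List.not_mem_nil, or_false] at hyc
    rcases hyc with rfl | rfl
    · rfl
    · exact absurd hy2 hb2
  refine ⟨T1.append R.reverse, P2.append (Walk.cons htb Walk.nil), hAp, hBp, ?_, ?_⟩
  · intro y hyA hyB
    rw [Walk.mem_support_append_iff] at hyA
    rw [Walk.mem_support_append_iff] at hyB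
    rw [Walk.support_reverse, List.mem_reverse] at hyA
    simp only [Walk.support_cons, Walk.support_nil, List.mem_cons,
      List.not_mem_nil, or_false] at hyB
    rcases hyB with hy2 | hyt
    · rcases hyA with hy1 | hyR
      · have := hd y (P1.support_takeUntil_subset hz1 hy1) hy2
        rcases this with rfl | rfl
        · exact Or.inl rfl
        · exact absurd hy1 htT1
      · have hyz := hRC y hyR (Or.inr hy2)
        subst hyz
        have := hd y hz1 hy2
        rcases this with rfl | rfl
        · exact Or.inl rfl
        · exact absurd rfl hzt
    · rcases hyt with rfl | rfl
      · rcases hyA with hy1 | hyR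
        · exact absurd hy1 htT1
        · exact absurd hyR htR
      · exact Or.inr rfl
  · intro e heA heB
    rw [Walk.edges_append, List.mem_append, Walk.edges_reverse, List.mem_reverse] at heA
    rw [Walk.edges_append, List.mem_append] at heB
    have hcons : (Walk.cons htb (Walk.nil : Γ.Walk b b)).edges = [s(t, b)] := rfl
    rcases heB with he2 | het
    · rcases heA with he1 | heR
      · exact he e (P1.edges_takeUntil_subset hz1 he1) he2
      · induction e with
        | _ c d =>
          have hc := hRC c (R.fst_mem_support_of_mem_edges heR)
            (Or.inr (P2.fst_mem_support_of_mem_edges he2))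
          have hdq := hRC d (R.snd_mem_support_of_mem_edges heR)
            (Or.inr (P2.snd_mem_support_of_mem_edges he2))
          exact (R.adj_of_mem_edges heR).ne (hc.trans hdq.symm)
    · rw [hcons, List.mem_singleton] at het
      subst het
      rcases heA with he1 | heR
      · exact htT1 (T1.fst_mem_support_of_mem_edges he1)
      · exact htR (R.fst_mem_support_of_mem_edges heR)

lemma menger2 (hconn : Γ.Connected) (hcard : 3 ≤ Nat.card W)
    (hdel : ∀ v : W, ((⊤ : Γ.Subgraph).deleteVerts {v}).coe.Connected) :
    ∀ (n : ℕ) {a b : W}, a ≠ b → Γ.dist a b ≤ n → TwoDisjPaths Γ a b := by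
  intro n
  induction n using Nat.strong_induction_on with
  | _ n ih =>
  intro a b hab hdist
  have hreach : Γ.Reachable a b := hconn.preconnected a b
  have hpos : 0 < Γ.dist a b := hreach.pos_dist_of_ne hab
  rcases Nat.lt_or_ge (Γ.dist a b) n with hlt | hge
  · exact ih (Γ.dist a b) hlt hab le_rfl
  · have hn : Γ.dist a b = n := le_antisymm hdist hge
    rcases Nat.lt_or_ge n 2 with h2 | h2
    · -- n = 1 : adjacent
      have h1 : Γ.dist a b = 1 := by omega
      have hadj : Γ.Adj a b := dist_eq_one_iff_adj.mp h1
      obtain ⟨q, hqp, hqe⟩ := exists_second_path hcard hdel hadj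
      refine ⟨Walk.cons hadj Walk.nil, q, ?_, hqp, ?_, ?_⟩
      · rw [Walk.cons_isPath_iff]
        exact ⟨Walk.IsPath.nil, by simpa using hadj.ne⟩
      · intro z hz _
        simp only [Walk.support_cons, Walk.support_nil, List.mem_cons,
          List.not_mem_nil, or_false] at hz
        exact hz
      · intro e hep
        simp only [Walk.edges_cons, Walk.edges_nil, List.mem_singleton] at hep
        subst hep
        exact hqe
    · -- n ≥ 2
      obtain ⟨p0, hp0, hlen⟩ := hreach.exists_path_of_dist
      have hrevnil : ¬ p0.reverse.Nil := by
        rw [Walk.nil_iff_length_eq, Walk.length_reverse]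
        omega
      rw [Walk.not_nil_iff] at hrevnil
      obtain ⟨t, hbt, q0, hq0⟩ := hrevnil
      have hq0p : q0.IsPath := by
        have := hp0.reverse
        rw [hq0, Walk.cons_isPath_iff] at this
        exact this.1
      have hq1len : q0.length = n - 1 := by
        have := congrArg Walk.length hq0
        rw [Walk.length_reverse, hlen, hn, Walk.length_cons] at this
        omega
      have htb : Γ.Adj t b := hbt.symm
      have hta : a ≠ t := by
        intro h
        subst h
        have : Γ.dist a b ≤ 1 := by
          have := SimpleGraph.dist_eq_one_iff_adj.mpr htb
          omega
        omega
      have hdistat : Γ.dist a t ≤ n - 1 := by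
        have := SimpleGraph.dist_le q0.reverse
        rw [Walk.length_reverse, hq1len] at this
        exact this
      obtain ⟨P1, P2, hP1, hP2, hd, he⟩ := ih (n - 1) (by omega) hta hdistat
      have hbt' : b ≠ t := htb.ne'
      by_cases hbC : b ∈ P1.support ∨ b ∈ P2.support
      · rcases hbC with hb1 | hb2
        · exact absorb hP1 hP2 hd he hb1 hab.symm hbt'
        · exact absorb hP2 hP1 (fun z h2 h1 => hd z h1 h2) (fun e h2 h1 => he e h1 h2)
            hb2 hab.symm hbt'
      · push_neg at hbC
        obtain ⟨hb1, hb2⟩ := hbC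
        obtain ⟨R0, hR0p, htR0⟩ := exists_path_avoiding (Γ := Γ) (hdel t) hbt' hta
        have haS : a ∈ {y | y ∈ P1.support ∨ y ∈ P2.support} := Or.inl P1.start_mem_support
        obtain ⟨z, R, hRp, hzS, hRC, hRsub⟩ := firstHit _ R0 hR0p haS
        have hzt : z ≠ t := by
          intro h
          subst h
          exact htR0 (hRsub z R.end_mem_support)
        rcases hzS with hz1 | hz2
        · exact reroute hP1 hP2 hd he htb hb1 hb2 hRp hz1 hRC hzt
        · exact reroute hP2 hP1 (fun y hy2 hy1 => hd y hy1 hy2)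
            (fun e he2 he1 => he e he1 he2) htb hb2 hb1 hRp hz2
            (fun y hy hmem => hRC y hy (Or.symm hmem)) hzt

def FanOut (Γ : SimpleGraph W) (S : Set W) (w : W) : Prop :=
  ∃ (u v : W) (Q : Γ.Walk u v), Q.IsPath ∧ u ≠ v ∧ u ∈ S ∧ v ∈ S ∧
    (∀ z ∈ Q.support, z ∈ S → z = u ∨ z = v) ∧ w ∈ Q.support

lemma fan_core {w t1 t2 : W} {S : Set W} (hw : w ∉ S) (ht1 : t1 ∈ S) (ht2 : t2 ∈ S)
    {R1 R2 : Γ.Walk w t1} (hR1 : R1.IsPath) (hR2 : R2.IsPath)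
    (hd : ∀ y ∈ R1.support, y ∈ R2.support → y = w ∨ y = t1)
    (hR1S : ∀ y ∈ R1.support, y ∈ S → y = t1) (hR2S : ∀ y ∈ R2.support, y ∈ S → y = t1)
    {z3 : W} {R4 : Γ.Walk t2 z3} (hR4 : R4.IsPath)
    (hz3 : z3 ∈ R1.support) (ht1R4 : t1 ∉ R4.support)
    (hR4C : ∀ y ∈ R4.support, (y ∈ R1.support ∨ y ∈ R2.support) → y = z3) :
    FanOut Γ S w := by
  obtain ⟨z4, R6, hR6, hz4S, hR6S, hR6sub⟩ := firstHit S R4.reverse hR4.reverse ht2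
  have hR6sub' : ∀ y ∈ R6.support, y ∈ R4.support := by
    intro y hy
    have := hR6sub y hy
    rwa [Walk.support_reverse, List.mem_reverse] at this
  have hz3t1 : z3 ≠ t1 := fun h => ht1R4 (h ▸ R4.end_mem_support)
  have hz4t1 : z4 ≠ t1 := fun h => ht1R4 (h ▸ hR6sub' z4 R6.end_mem_support)
  set T := R1.takeUntil z3 hz3 with hT
  have hTp : T.IsPath := hR1.takeUntil hz3
  have htT : t1 ∉ T.support := not_mem_takeUntil hR1 hz3 hz3t1
  have h1 : (R2.reverse.append T).IsPath := by
    apply isPath_append hR2.reverse hTp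
    intro y hy2 hyT
    rw [Walk.support_reverse, List.mem_reverse] at hy2
    rcases hd y (R1.support_takeUntil_subset hz3 hyT) hy2 with rfl | rfl
    · rfl
    · exact absurd hyT htT
  have h2 : ((R2.reverse.append T).append R6).IsPath := by
    apply isPath_append h1 hR6
    intro y hy1 hy6
    rw [Walk.mem_support_append_iff] at hy1
    apply hR4C y (hR6sub' y hy6)
    rcases hy1 with hy2 | hyT
    · rw [Walk.support_reverse, List.mem_reverse] at hy2
      exact Or.inr hy2
    · exact Or.inl (R1.support_takeUntil_subset hz3 hyT)
  refine ⟨t1, z4, (R2.reverse.append T).append R6, h2, fun h => hz4t1 h.symm, ht1, hz4S,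
    ?_, ?_⟩
  · intro y hy hyS
    rw [Walk.mem_support_append_iff, Walk.mem_support_append_iff] at hy
    rcases hy with (hy2 | hyT) | hy6
    · rw [Walk.support_reverse, List.mem_reverse] at hy2
      exact Or.inl (hR2S y hy2 hyS)
    · exact Or.inl (hR1S y (R1.support_takeUntil_subset hz3 hyT) hyS)
    · exact Or.inr (hR6S y hy6 hyS)
  · rw [Walk.mem_support_append_iff, Walk.mem_support_append_iff]
    left; left
    rw [Walk.support_reverse, List.mem_reverse]
    exact R2.start_mem_support

lemma fan (hconn : Γ.Connected) (hcard : 3 ≤ Nat.card W)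
    (hdel : ∀ v : W, ((⊤ : Γ.Subgraph).deleteVerts {v}).coe.Connected)
    {w : W} {S : Set W} (hw : w ∉ S)
    {t1 t2 : W} (ht1 : t1 ∈ S) (ht2 : t2 ∈ S) (h12 : t1 ≠ t2) : FanOut Γ S w := by
  have hwt1 : w ≠ t1 := fun h => hw (h ▸ ht1)
  obtain ⟨P, P', hP, hP', hd, -⟩ := menger2 hconn hcard hdel (Γ.dist w t1) hwt1 le_rfl
  obtain ⟨u, R1, hR1, huS, hR1S, hR1sub⟩ := firstHit S P hP ht1
  obtain ⟨v, R2, hR2, hvS, hR2S, hR2sub⟩ := firstHit S P' hP' ht1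
  have hdR : ∀ y ∈ R1.support, y ∈ R2.support → y = w ∨ y = t1 := fun y hy1 hy2 =>
    hd y (hR1sub y hy1) (hR2sub y hy2)
  by_cases huv : u = v
  · subst huv
    have hut1 : u = t1 := by
      rcases hdR u R1.end_mem_support R2.end_mem_support with rfl | rfl
      · exact absurd huS hw
      · rfl
    subst hut1
    obtain ⟨R3, hR3p, ht1R3⟩ := exists_path_avoiding (Γ := Γ) (hdel u) h12.symm hwt1
    have hwC : w ∈ {y | y ∈ R1.support ∨ y ∈ R2.support} := Or.inl R1.start_mem_support
    obtain ⟨z3, R4, hR4, hz3C, hR4C, hR4sub⟩ := firstHit _ R3 hR3p hwC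
    have ht1R4 : u ∉ R4.support := fun hc => ht1R3 (hR4sub u hc)
    rcases hz3C with h | h
    · exact fan_core hw ht1 ht2 hR1 hR2 hdR hR1S hR2S hR4 h ht1R4 hR4C
    · exact fan_core hw ht1 ht2 hR2 hR1 (fun y hy2 hy1 => (hdR y hy1 hy2)) hR2S hR1S hR4 h
        ht1R4 (fun y hy hmem => hR4C y hy (Or.symm hmem))
  · refine ⟨u, v, R1.reverse.append R2, ?_, huv, huS, hvS, ?_, ?_⟩
    · apply isPath_append hR1.reverse hR2
      intro y hy1 hy2
      rw [Walk.support_reverse, List.mem_reverse] at hy1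
      rcases hdR y hy1 hy2 with rfl | rfl
      · rfl
      · exact absurd ((hR1S y hy1 ht1).symm.trans (hR2S y hy2 ht1)) huv
    · intro z hz hzS
      rw [Walk.mem_support_append_iff] at hz
      rcases hz with hz1 | hz2
      · rw [Walk.support_reverse, List.mem_reverse] at hz1
        exact Or.inl (hR1S z hz1 hzS)
      · exact Or.inr (hR2S z hz2 hzS)
    · rw [Walk.mem_support_append_iff]
      exact Or.inr R2.start_mem_support

lemma mem_reverse_support {a b : W} (p : Γ.Walk a b) (z : W) :
    z ∈ p.reverse.support ↔ z ∈ p.support := by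
  rw [Walk.support_reverse, List.mem_reverse]

lemma mem_reverse_edges {a b : W} (p : Γ.Walk a b) (e : Sym2 W) :
    e ∈ p.reverse.edges ↔ e ∈ p.edges := by
  rw [Walk.edges_reverse, List.mem_reverse]

lemma one_le_length_of_ne {a b : W} (h : a ≠ b) (p : Γ.Walk a b) : 1 ≤ p.length := by
  cases p with
  | nil => exact absurd rfl h
  | cons h q => simp [Walk.length_cons]

structure GoodTheta (Γ : SimpleGraph W) (x y : W) (p1 p2 p3 : Γ.Walk x y) : Prop where
  hxy : x ≠ y
  h1 : p1.IsPath
  h2 : p2.IsPath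
  h3 : p3.IsPath
  o1 : Odd p1.length
  o2 : Odd p2.length
  o3 : Odd p3.length
  d12 : ∀ z ∈ p1.support, z ∈ p2.support → z = x ∨ z = y
  d13 : ∀ z ∈ p1.support, z ∈ p3.support → z = x ∨ z = y
  d23 : ∀ z ∈ p2.support, z ∈ p3.support → z = x ∨ z = y
  e12 : ∀ e ∈ p1.edges, e ∉ p2.edges
  e13 : ∀ e ∈ p1.edges, e ∉ p3.edges
  e23 : ∀ e ∈ p2.edges, e ∉ p3.edges

lemma GoodTheta.contains {x y : W} {p1 p2 p3 : Γ.Walk x y} (hT : GoodTheta Γ x y p1 p2 p3)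
    {w : W} (hw : w ∈ p1.support ∨ w ∈ p2.support ∨ w ∈ p3.support) :
    ContainsOddThetaThrough Γ w :=
  ⟨x, y, p1, p2, p3, hT.hxy, hT.h1, hT.h2, hT.h3, hT.o1, hT.o2, hT.o3,
    hT.d12, hT.d13, hT.d23, hT.e12, hT.e13, hT.e23, hw⟩

lemma GoodTheta.perm12 {x y : W} {p1 p2 p3 : Γ.Walk x y} (hT : GoodTheta Γ x y p1 p2 p3) :
    GoodTheta Γ x y p2 p1 p3 :=
  ⟨hT.hxy, hT.h2, hT.h1, hT.h3, hT.o2, hT.o1, hT.o3,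
    fun z h2 h1 => hT.d12 z h1 h2, hT.d23, hT.d13,
    fun e h2 h1 => hT.e12 e h1 h2, hT.e23, hT.e13⟩

lemma GoodTheta.perm23 {x y : W} {p1 p2 p3 : Γ.Walk x y} (hT : GoodTheta Γ x y p1 p2 p3) :
    GoodTheta Γ x y p1 p3 p2 :=
  ⟨hT.hxy, hT.h1, hT.h3, hT.h2, hT.o1, hT.o3, hT.o2,
    hT.d13, hT.d12, fun z h3 h2 => hT.d23 z h2 h3,
    hT.e13, hT.e12, fun e h3 h2 => hT.e23 e h2 h3⟩

lemma GoodTheta.rev {x y : W} {p1 p2 p3 : Γ.Walk x y} (hT : GoodTheta Γ x y p1 p2 p3) :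
    GoodTheta Γ y x p1.reverse p2.reverse p3.reverse := by
  refine ⟨hT.hxy.symm, hT.h1.reverse, hT.h2.reverse, hT.h3.reverse, ?_, ?_, ?_, ?_, ?_, ?_,
    ?_, ?_, ?_⟩
  · rw [Walk.length_reverse]; exact hT.o1
  · rw [Walk.length_reverse]; exact hT.o2
  · rw [Walk.length_reverse]; exact hT.o3
  · intro z h1 h2
    rw [mem_reverse_support] at h1 h2
    exact (hT.d12 z h1 h2).symm
  · intro z h1 h2
    rw [mem_reverse_support] at h1 h2
    exact (hT.d13 z h1 h2).symm
  · intro z h1 h2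
    rw [mem_reverse_support] at h1 h2
    exact (hT.d23 z h1 h2).symm
  · intro e h1 h2
    rw [mem_reverse_edges] at h1 h2
    exact hT.e12 e h1 h2
  · intro e h1 h2
    rw [mem_reverse_edges] at h1 h2
    exact hT.e13 e h1 h2
  · intro e h1 h2
    rw [mem_reverse_edges] at h1 h2
    exact hT.e23 e h1 h2

lemma coreA (hbip : ¬ HasOddCircuit Γ) {x y : W} {p1 p2 p3 : Γ.Walk x y}
    (hT : GoodTheta Γ x y p1 p2 p3) {Q : Γ.Walk x y} (hQ : Q.IsPath)
    (hQS : ∀ z ∈ Q.support, (z ∈ p1.support ∨ z ∈ p2.support ∨ z ∈ p3.support) →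
      z = x ∨ z = y)
    {w : W} (hwQ : w ∈ Q.support)
    (hw : ¬(w ∈ p1.support ∨ w ∈ p2.support ∨ w ∈ p3.support)) :
    ContainsOddThetaThrough Γ w := by
  have hwx : w ≠ x := fun h => hw (Or.inl (h ▸ p1.start_mem_support))
  have hwy : w ≠ y := fun h => hw (Or.inl (h ▸ p1.end_mem_support))
  have hQ2 : 2 ≤ Q.length := two_le_length_of_mem hwQ hwx hwy
  have dQ1 : ∀ z ∈ Q.support, z ∈ p1.support → z = x ∨ z = y := fun z hz h1 =>
    hQS z hz (Or.inl h1)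
  have dQ2 : ∀ z ∈ Q.support, z ∈ p2.support → z = x ∨ z = y := fun z hz h2 =>
    hQS z hz (Or.inr (Or.inl h2))
  have oQ : Odd Q.length := (walk_parity hbip Q p1).mpr hT.o1
  exact ⟨x, y, Q, p1, p2, hT.hxy, hQ, hT.h1, hT.h2, oQ, hT.o1, hT.o2,
    dQ1, dQ2, hT.d12,
    edges_disjoint_of_internal hT.hxy hQ hT.h1 dQ1 (by omega),
    edges_disjoint_of_internal hT.hxy hQ hT.h2 dQ2 (by omega),
    hT.e12, Or.inl hwQ⟩

lemma coreB (hbip : ¬ HasOddCircuit Γ) {x y : W} {p1 p2 p3 : Γ.Walk x y}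
    (hT : GoodTheta Γ x y p1 p2 p3) {v : W} (hv1 : v ∈ p1.support)
    (hvx : v ≠ x) (hvy : v ≠ y) {Q : Γ.Walk x v} (hQ : Q.IsPath)
    (hQS : ∀ z ∈ Q.support, (z ∈ p1.support ∨ z ∈ p2.support ∨ z ∈ p3.support) →
      z = x ∨ z = v)
    {w : W} (hwQ : w ∈ Q.support)
    (hw : ¬(w ∈ p1.support ∨ w ∈ p2.support ∨ w ∈ p3.support)) :
    ContainsOddThetaThrough Γ w := by
  have hwx : w ≠ x := fun h => hw (Or.inl (h ▸ p1.start_mem_support))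
  have hwy : w ≠ y := fun h => hw (Or.inl (h ▸ p1.end_mem_support))
  set d := p1.dropUntil v hv1 with hd
  have hdp : d.IsPath := hT.h1.dropUntil hv1
  have hxd : x ∉ d.support := not_mem_dropUntil hT.h1 hv1 hvx
  have hp1' : (Q.append d).IsPath := by
    apply isPath_append hQ hdp
    intro z hzQ hzd
    rcases hQS z hzQ (Or.inl (p1.support_dropUntil_subset hv1 hzd)) with rfl | rfl
    · exact absurd hzd hxd
    · rfl
  have hvnot : ∀ {pk : Γ.Walk x y}, (∀ z ∈ p1.support, z ∈ pk.support → z = x ∨ z = y) →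
      v ∉ pk.support := by
    intro pk hdk hc
    rcases hdk v hv1 hc with rfl | rfl
    · exact absurd rfl hvx
    · exact absurd rfl hvy
  have d12' : ∀ z ∈ (Q.append d).support, z ∈ p2.support → z = x ∨ z = y := by
    intro z hz h2
    rw [Walk.mem_support_append_iff] at hz
    rcases hz with hzQ | hzd
    · rcases hQS z hzQ (Or.inr (Or.inl h2)) with rfl | rfl
      · exact Or.inl rfl
      · exact absurd h2 (hvnot hT.d12)
    · exact hT.d12 z (p1.support_dropUntil_subset hv1 hzd) h2
  have d13' : ∀ z ∈ (Q.append d).support, z ∈ p3.support → z = x ∨ z = y := by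
    intro z hz h3
    rw [Walk.mem_support_append_iff] at hz
    rcases hz with hzQ | hzd
    · rcases hQS z hzQ (Or.inr (Or.inr h3)) with rfl | rfl
      · exact Or.inl rfl
      · exact absurd h3 (hvnot hT.d13)
    · exact hT.d13 z (p1.support_dropUntil_subset hv1 hzd) h3
  have oQ : Odd (Q.append d).length := (walk_parity hbip _ p1).mpr hT.o1
  have hwmem : w ∈ (Q.append d).support := by
    rw [Walk.mem_support_append_iff]; exact Or.inl hwQ
  have h2len : 2 ≤ (Q.append d).length := two_le_length_of_mem hwmem hwx hwy
  exact ⟨x, y, Q.append d, p2, p3, hT.hxy, hp1', hT.h2, hT.h3, oQ, hT.o2, hT.o3,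
    d12', d13', hT.d23,
    edges_disjoint_of_internal hT.hxy hp1' hT.h2 d12' (by omega),
    edges_disjoint_of_internal hT.hxy hp1' hT.h3 d13' (by omega),
    hT.e23, Or.inl hwmem⟩

lemma internal_not_mem {x y u : W} {p q : Γ.Walk x y}
    (hd : ∀ z ∈ p.support, z ∈ q.support → z = x ∨ z = y)
    (hu : u ∈ p.support) (hux : u ≠ x) (huy : u ≠ y) : u ∉ q.support := fun hc => by
  rcases hd u hu hc with rfl | rfl
  exacts [absurd rfl hux, absurd rfl huy]

lemma coreC_after (hbip : ¬ HasOddCircuit Γ) {x y : W} {p1 p2 p3 : Γ.Walk x y}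
    (hT : GoodTheta Γ x y p1 p2 p3) {u v : W} (hu1 : u ∈ p1.support)
    (hux : u ≠ x) (huy : u ≠ y) (hvx : v ≠ x) (hvy : v ≠ y) (huv : u ≠ v)
    (hvd : v ∈ (p1.dropUntil u hu1).support)
    {Q : Γ.Walk u v} (hQ : Q.IsPath)
    (hQS : ∀ z ∈ Q.support, (z ∈ p1.support ∨ z ∈ p2.support ∨ z ∈ p3.support) →
      z = u ∨ z = v)
    {w : W} (hwQ : w ∈ Q.support)
    (hw : ¬(w ∈ p1.support ∨ w ∈ p2.support ∨ w ∈ p3.support)) :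
    ContainsOddThetaThrough Γ w := by
  have hwx : w ≠ x := fun h => hw (Or.inl (h ▸ p1.start_mem_support))
  have hwy : w ≠ y := fun h => hw (Or.inl (h ▸ p1.end_mem_support))
  set t := p1.takeUntil u hu1 with htdef
  set du := p1.dropUntil u hu1 with hdudef
  have htp : t.IsPath := hT.h1.takeUntil hu1
  have hdup : du.IsPath := hT.h1.dropUntil hu1
  set d2 := du.dropUntil v hvd with hd2def
  have hd2p : d2.IsPath := hdup.dropUntil hvd
  have hd2sub : ∀ z ∈ d2.support, z ∈ p1.support := fun z hz =>
    p1.support_dropUntil_subset hu1 (du.support_dropUntil_subset hvd hz)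
  have hud2 : u ∉ d2.support := not_mem_dropUntil hdup hvd huv.symm
  have hv1 : v ∈ p1.support := p1.support_dropUntil_subset hu1 hvd
  have hu2 : u ∉ p2.support := internal_not_mem hT.d12 hu1 hux huy
  have hu3 : u ∉ p3.support := internal_not_mem hT.d13 hu1 hux huy
  have hv2 : v ∉ p2.support := internal_not_mem hT.d12 hv1 hvx hvy
  have hv3 : v ∉ p3.support := internal_not_mem hT.d13 hv1 hvx hvy
  have hinner : (Q.append d2).IsPath := by
    apply isPath_append hQ hd2p
    intro z hzQ hzd
    rcases hQS z hzQ (Or.inl (hd2sub z hzd)) with rfl | rfl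
    · exact absurd hzd hud2
    · rfl
  have hp1' : (t.append (Q.append d2)).IsPath := by
    apply isPath_append htp hinner
    intro z hzt hzin
    rw [Walk.mem_support_append_iff] at hzin
    rcases hzin with hzQ | hzd
    · rcases hQS z hzQ (Or.inl (p1.support_takeUntil_subset hu1 hzt)) with rfl | rfl
      · rfl
      · exact absurd (mem_takeUntil_mem_dropUntil hT.h1 hu1 _ hzt hvd) huv.symm
    · exact mem_takeUntil_mem_dropUntil hT.h1 hu1 z hzt (du.support_dropUntil_subset hvd hzd)
  have d12' : ∀ z ∈ (t.append (Q.append d2)).support, z ∈ p2.support → z = x ∨ z = y := by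
    intro z hz h2
    rw [Walk.mem_support_append_iff, Walk.mem_support_append_iff] at hz
    rcases hz with hzt | hzQ | hzd
    · exact hT.d12 z (p1.support_takeUntil_subset hu1 hzt) h2
    · rcases hQS z hzQ (Or.inr (Or.inl h2)) with rfl | rfl
      exacts [absurd h2 hu2, absurd h2 hv2]
    · exact hT.d12 z (hd2sub z hzd) h2
  have d13' : ∀ z ∈ (t.append (Q.append d2)).support, z ∈ p3.support → z = x ∨ z = y := by
    intro z hz h3
    rw [Walk.mem_support_append_iff, Walk.mem_support_append_iff] at hz
    rcases hz with hzt | hzQ | hzd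
    · exact hT.d13 z (p1.support_takeUntil_subset hu1 hzt) h3
    · rcases hQS z hzQ (Or.inr (Or.inr h3)) with rfl | rfl
      exacts [absurd h3 hu3, absurd h3 hv3]
    · exact hT.d13 z (hd2sub z hzd) h3
  have oQ : Odd (t.append (Q.append d2)).length := (walk_parity hbip _ p1).mpr hT.o1
  have hwmem : w ∈ (t.append (Q.append d2)).support := by
    rw [Walk.mem_support_append_iff, Walk.mem_support_append_iff]
    exact Or.inr (Or.inl hwQ)
  have h2len : 2 ≤ (t.append (Q.append d2)).length := two_le_length_of_mem hwmem hwx hwy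
  exact ⟨x, y, t.append (Q.append d2), p2, p3, hT.hxy, hp1', hT.h2, hT.h3, oQ, hT.o2, hT.o3,
    d12', d13', hT.d23,
    edges_disjoint_of_internal hT.hxy hp1' hT.h2 d12' (by omega),
    edges_disjoint_of_internal hT.hxy hp1' hT.h3 d13' (by omega),
    hT.e23, Or.inl hwmem⟩

lemma coreC_before (hbip : ¬ HasOddCircuit Γ) {x y : W} {p1 p2 p3 : Γ.Walk x y}
    (hT : GoodTheta Γ x y p1 p2 p3) {u v : W} (hu1 : u ∈ p1.support)
    (hux : u ≠ x) (huy : u ≠ y) (hvx : v ≠ x) (hvy : v ≠ y) (huv : u ≠ v)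
    (hvt : v ∈ (p1.takeUntil u hu1).support)
    {Q : Γ.Walk u v} (hQ : Q.IsPath)
    (hQS : ∀ z ∈ Q.support, (z ∈ p1.support ∨ z ∈ p2.support ∨ z ∈ p3.support) →
      z = u ∨ z = v)
    {w : W} (hwQ : w ∈ Q.support)
    (hw : ¬(w ∈ p1.support ∨ w ∈ p2.support ∨ w ∈ p3.support)) :
    ContainsOddThetaThrough Γ w := by
  have hwx : w ≠ x := fun h => hw (Or.inl (h ▸ p1.start_mem_support))
  have hwy : w ≠ y := fun h => hw (Or.inl (h ▸ p1.end_mem_support))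
  set t := p1.takeUntil u hu1 with htdef
  set du := p1.dropUntil u hu1 with hdudef
  have htp : t.IsPath := hT.h1.takeUntil hu1
  have hdup : du.IsPath := hT.h1.dropUntil hu1
  set t2 := t.takeUntil v hvt with ht2def
  have ht2p : t2.IsPath := htp.takeUntil hvt
  have ht2sub : ∀ z ∈ t2.support, z ∈ p1.support := fun z hz =>
    p1.support_takeUntil_subset hu1 (t.support_takeUntil_subset hvt hz)
  have hut2 : u ∉ t2.support := not_mem_takeUntil htp hvt huv.symm
  have hv1 : v ∈ p1.support := p1.support_takeUntil_subset hu1 hvt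
  have hu2 : u ∉ p2.support := internal_not_mem hT.d12 hu1 hux huy
  have hu3 : u ∉ p3.support := internal_not_mem hT.d13 hu1 hux huy
  have hv2 : v ∉ p2.support := internal_not_mem hT.d12 hv1 hvx hvy
  have hv3 : v ∉ p3.support := internal_not_mem hT.d13 hv1 hvx hvy
  have hvdu : v ∉ du.support := fun hc =>
    huv.symm (mem_takeUntil_mem_dropUntil hT.h1 hu1 v hvt hc)
  have hinner : (Q.reverse.append du).IsPath := by
    apply isPath_append hQ.reverse hdup
    intro z hzQ hzd
    rw [mem_reverse_support] at hzQ
    rcases hQS z hzQ (Or.inl (p1.support_dropUntil_subset hu1 hzd)) with rfl | rfl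
    · rfl
    · exact absurd hzd hvdu
  have hp1' : (t2.append (Q.reverse.append du)).IsPath := by
    apply isPath_append ht2p hinner
    intro z hzt hzin
    rw [Walk.mem_support_append_iff] at hzin
    rcases hzin with hzQ | hzd
    · rw [mem_reverse_support] at hzQ
      rcases hQS z hzQ (Or.inl (ht2sub z hzt)) with rfl | rfl
      · exact absurd hzt hut2
      · rfl
    · exact absurd (mem_takeUntil_mem_dropUntil hT.h1 hu1 z
        (t.support_takeUntil_subset hvt hzt) hzd ▸ hzt) hut2
  have d12' : ∀ z ∈ (t2.append (Q.reverse.append du)).support, z ∈ p2.support →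
      z = x ∨ z = y := by
    intro z hz h2
    rw [Walk.mem_support_append_iff, Walk.mem_support_append_iff] at hz
    rcases hz with hzt | hzQ | hzd
    · exact hT.d12 z (ht2sub z hzt) h2
    · rw [mem_reverse_support] at hzQ
      rcases hQS z hzQ (Or.inr (Or.inl h2)) with rfl | rfl
      exacts [absurd h2 hu2, absurd h2 hv2]
    · exact hT.d12 z (p1.support_dropUntil_subset hu1 hzd) h2
  have d13' : ∀ z ∈ (t2.append (Q.reverse.append du)).support, z ∈ p3.support →
      z = x ∨ z = y := by
    intro z hz h3
    rw [Walk.mem_support_append_iff, Walk.mem_support_append_iff] at hz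
    rcases hz with hzt | hzQ | hzd
    · exact hT.d13 z (ht2sub z hzt) h3
    · rw [mem_reverse_support] at hzQ
      rcases hQS z hzQ (Or.inr (Or.inr h3)) with rfl | rfl
      exacts [absurd h3 hu3, absurd h3 hv3]
    · exact hT.d13 z (p1.support_dropUntil_subset hu1 hzd) h3
  have oQ : Odd (t2.append (Q.reverse.append du)).length := (walk_parity hbip _ p1).mpr hT.o1
  have hwmem : w ∈ (t2.append (Q.reverse.append du)).support := by
    rw [Walk.mem_support_append_iff, Walk.mem_support_append_iff, mem_reverse_support]
    exact Or.inr (Or.inl hwQ)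
  have h2len : 2 ≤ (t2.append (Q.reverse.append du)).length := two_le_length_of_mem hwmem hwx hwy
  exact ⟨x, y, t2.append (Q.reverse.append du), p2, p3, hT.hxy, hp1', hT.h2, hT.h3,
    oQ, hT.o2, hT.o3, d12', d13', hT.d23,
    edges_disjoint_of_internal hT.hxy hp1' hT.h2 d12' (by omega),
    edges_disjoint_of_internal hT.hxy hp1' hT.h3 d13' (by omega),
    hT.e23, Or.inl hwmem⟩

lemma coreD (hbip : ¬ HasOddCircuit Γ) {x y : W} {p1 p2 p3 : Γ.Walk x y}
    (hT : GoodTheta Γ x y p1 p2 p3) {u v : W} (hu1 : u ∈ p1.support) (hv2 : v ∈ p2.support)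
    (hux : u ≠ x) (huy : u ≠ y) (hvx : v ≠ x) (hvy : v ≠ y) (huv : u ≠ v)
    {Q : Γ.Walk u v} (hQ : Q.IsPath)
    (hQS : ∀ z ∈ Q.support, (z ∈ p1.support ∨ z ∈ p2.support ∨ z ∈ p3.support) →
      z = u ∨ z = v)
    {w : W} (hwQ : w ∈ Q.support)
    (hw : ¬(w ∈ p1.support ∨ w ∈ p2.support ∨ w ∈ p3.support)) :
    ContainsOddThetaThrough Γ w := by
  have hwx : w ≠ x := fun h => hw (Or.inl (h ▸ p1.start_mem_support))
  have hwy : w ≠ y := fun h => hw (Or.inl (h ▸ p1.end_mem_support))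
  have hwu : w ≠ u := fun h => hw (Or.inl (h ▸ hu1))
  have hwv : w ≠ v := fun h => hw (Or.inr (Or.inl (h ▸ hv2)))
  set t1 := p1.takeUntil u hu1 with ht1def
  set d1 := p1.dropUntil u hu1 with hd1def
  set t2 := p2.takeUntil v hv2 with ht2def
  set d2 := p2.dropUntil v hv2 with hd2def
  have ht1p : t1.IsPath := hT.h1.takeUntil hu1
  have hd1p : d1.IsPath := hT.h1.dropUntil hu1
  have ht2p : t2.IsPath := hT.h2.takeUntil hv2
  have hd2p : d2.IsPath := hT.h2.dropUntil hv2
  have ht1sub := p1.support_takeUntil_subset hu1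
  have hd1sub := p1.support_dropUntil_subset hu1
  have ht2sub := p2.support_takeUntil_subset hv2
  have hd2sub := p2.support_dropUntil_subset hv2
  have hyt1 : y ∉ t1.support := not_mem_takeUntil hT.h1 hu1 huy
  have hxd1 : x ∉ d1.support := not_mem_dropUntil hT.h1 hu1 hux
  have hyt2 : y ∉ t2.support := not_mem_takeUntil hT.h2 hv2 hvy
  have hxd2 : x ∉ d2.support := not_mem_dropUntil hT.h2 hv2 hvx
  have hu2 : u ∉ p2.support := internal_not_mem hT.d12 hu1 hux huy
  have hu3 : u ∉ p3.support := internal_not_mem hT.d13 hu1 hux huy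
  have hv1 : v ∉ p1.support := fun hc => (internal_not_mem hT.d12 hc hvx hvy) hv2
  have hv3 : v ∉ p3.support := internal_not_mem hT.d23 hv2 hvx hvy
  have hQ2 : 2 ≤ Q.length := two_le_length_of_mem hwQ hwu hwv
  have lt1 : 1 ≤ t1.length := one_le_length_of_ne (fun h => hux h.symm) t1
  have ld1 : 1 ≤ d1.length := one_le_length_of_ne huy d1
  have lt2 : 1 ≤ t2.length := one_le_length_of_ne (fun h => hvx h.symm) t2
  have ld2 : 1 ≤ d2.length := one_le_length_of_ne hvy d2
  have sum2 : t2.length + d2.length = p2.length := by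
    have := congrArg Walk.length (p2.take_spec hv2)
    rwa [Walk.length_append] at this
  by_cases hpar : Odd (t1.length + t2.length)
  · -- new theta with ends u, v
    set B := t1.reverse.append t2 with hBdef
    set C := d1.append d2.reverse with hCdef
    have hB : B.IsPath := by
      apply isPath_append ht1p.reverse ht2p
      intro z hz1 hz2
      rw [mem_reverse_support] at hz1
      rcases hT.d12 z (ht1sub hz1) (ht2sub hz2) with rfl | rfl
      · rfl
      · exact absurd hz1 hyt1
    have hC : C.IsPath := by
      apply isPath_append hd1p hd2p.reverse
      intro z hz1 hz2
      rw [mem_reverse_support] at hz2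
      rcases hT.d12 z (hd1sub hz1) (hd2sub hz2) with rfl | rfl
      · exact absurd hz1 hxd1
      · rfl
    have oB : Odd B.length := by
      rw [hBdef, Walk.length_append, Walk.length_reverse]
      exact hpar
    have oA : Odd Q.length := (walk_parity hbip Q B).mpr oB
    have oC : Odd C.length := (walk_parity hbip C B).mpr oB
    have dAB : ∀ z ∈ Q.support, z ∈ B.support → z = u ∨ z = v := by
      intro z hz hzB
      rw [Walk.mem_support_append_iff, mem_reverse_support] at hzB
      rcases hzB with hz1 | hz2
      · exact hQS z hz (Or.inl (ht1sub hz1))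
      · exact hQS z hz (Or.inr (Or.inl (ht2sub hz2)))
    have dAC : ∀ z ∈ Q.support, z ∈ C.support → z = u ∨ z = v := by
      intro z hz hzC
      rw [Walk.mem_support_append_iff, mem_reverse_support] at hzC
      rcases hzC with hz1 | hz2
      · exact hQS z hz (Or.inl (hd1sub hz1))
      · exact hQS z hz (Or.inr (Or.inl (hd2sub hz2)))
    have dBC : ∀ z ∈ B.support, z ∈ C.support → z = u ∨ z = v := by
      intro z hzB hzC
      rw [Walk.mem_support_append_iff, mem_reverse_support] at hzB hzC
      rcases hzB with hz1 | hz2 <;> rcases hzC with hz1' | hz2'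
      · exact Or.inl (mem_takeUntil_mem_dropUntil hT.h1 hu1 z hz1 hz1')
      · rcases hT.d12 z (ht1sub hz1) (hd2sub hz2') with rfl | rfl
        · exact absurd hz2' hxd2
        · exact absurd hz1 hyt1
      · rcases hT.d12 z (hd1sub hz1') (ht2sub hz2) with rfl | rfl
        · exact absurd hz1' hxd1
        · exact absurd hz2 hyt2
      · exact Or.inr (mem_takeUntil_mem_dropUntil hT.h2 hv2 z hz2 hz2')
    have hBlen : 2 ≤ B.length := by
      rw [hBdef, Walk.length_append, Walk.length_reverse]; omega
    exact ⟨u, v, Q, B, C, huv, hQ, hB, hC, oA, oB, oC, dAB, dAC, dBC,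
      edges_disjoint_of_internal huv hQ hB dAB (by omega),
      edges_disjoint_of_internal huv hQ hC dAC (by omega),
      edges_disjoint_of_internal huv hB hC dBC (by omega),
      Or.inl hwQ⟩
  · by_cases h2 : Odd t2.length
    · -- new theta with ends x, v
      have hxv : x ≠ v := fun h => hvx h.symm
      set A := t1.append Q with hAdef
      set C := p3.append d2.reverse with hCdef
      have hA : A.IsPath := by
        apply isPath_append ht1p hQ
        intro z hz1 hzQ
        rcases hQS z hzQ (Or.inl (ht1sub hz1)) with rfl | rfl
        · rfl
        · exact absurd (ht1sub hz1) hv1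
      have hC : C.IsPath := by
        apply isPath_append hT.h3 hd2p.reverse
        intro z hz3 hz2
        rw [mem_reverse_support] at hz2
        rcases hT.d23 z (hd2sub hz2) hz3 with rfl | rfl
        · exact absurd hz2 hxd2
        · rfl
      have oB : Odd t2.length := h2
      have oA : Odd A.length := (walk_parity hbip A t2).mpr oB
      have oC : Odd C.length := (walk_parity hbip C t2).mpr oB
      have dAB : ∀ z ∈ A.support, z ∈ t2.support → z = x ∨ z = v := by
        intro z hzA hz2
        rw [Walk.mem_support_append_iff] at hzA
        rcases hzA with hz1 | hzQ
        · rcases hT.d12 z (ht1sub hz1) (ht2sub hz2) with rfl | rfl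
          · exact Or.inl rfl
          · exact absurd hz1 hyt1
        · rcases hQS z hzQ (Or.inr (Or.inl (ht2sub hz2))) with rfl | rfl
          · exact absurd (ht2sub hz2) hu2
          · exact Or.inr rfl
      have dAC : ∀ z ∈ A.support, z ∈ C.support → z = x ∨ z = v := by
        intro z hzA hzC
        rw [Walk.mem_support_append_iff] at hzA
        rw [Walk.mem_support_append_iff, mem_reverse_support] at hzC
        rcases hzA with hz1 | hzQ
        · rcases hzC with hz3 | hz2
          · rcases hT.d13 z (ht1sub hz1) hz3 with rfl | rfl
            · exact Or.inl rfl
            · exact absurd hz1 hyt1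
          · rcases hT.d12 z (ht1sub hz1) (hd2sub hz2) with rfl | rfl
            · exact absurd hz2 hxd2
            · exact absurd hz1 hyt1
        · rcases hzC with hz3 | hz2
          · rcases hQS z hzQ (Or.inr (Or.inr hz3)) with rfl | rfl
            · exact absurd hz3 hu3
            · exact Or.inr rfl
          · rcases hQS z hzQ (Or.inr (Or.inl (hd2sub hz2))) with rfl | rfl
            · exact absurd (hd2sub hz2) hu2
            · exact Or.inr rfl
      have dBC : ∀ z ∈ t2.support, z ∈ C.support → z = x ∨ z = v := by
        intro z hz2 hzC
        rw [Walk.mem_support_append_iff, mem_reverse_support] at hzC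
        rcases hzC with hz3 | hz2'
        · rcases hT.d23 z (ht2sub hz2) hz3 with rfl | rfl
          · exact Or.inl rfl
          · exact absurd hz2 hyt2
        · exact Or.inr (mem_takeUntil_mem_dropUntil hT.h2 hv2 z hz2 hz2')
      have hwA : w ∈ A.support := by
        rw [Walk.mem_support_append_iff]; exact Or.inr hwQ
      have hA2 : 2 ≤ A.length := two_le_length_of_mem hwA hwx hwv
      have lp3 : 1 ≤ p3.length := one_le_length_of_ne hT.hxy p3
      have hC2 : 2 ≤ C.length := by
        rw [hCdef, Walk.length_append, Walk.length_reverse]; omega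
      exact ⟨x, v, A, t2, C, hxv, hA, ht2p, hC, oA, oB, oC, dAB, dAC, dBC,
        edges_disjoint_of_internal hxv hA ht2p dAB (by omega),
        edges_disjoint_of_internal hxv hA hC dAC (by omega),
        edges_disjoint_of_internal hxv ht2p hC dBC (by omega),
        Or.inl hwA⟩
    · -- t2 even, d2 odd: new theta with ends y, v
      have hyv : y ≠ v := fun h => hvy h.symm
      have od2 : Odd d2.length := by
        have ho2 := hT.o2
        rw [Nat.odd_iff] at ho2 ⊢
        rw [Nat.not_odd_iff_even, Nat.even_iff] at h2
        omega
      set A := d1.reverse.append Q with hAdef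
      set B := d2.reverse with hBdef
      set C := p3.reverse.append t2 with hCdef
      have hA : A.IsPath := by
        apply isPath_append hd1p.reverse hQ
        intro z hz1 hzQ
        rw [mem_reverse_support] at hz1
        rcases hQS z hzQ (Or.inl (hd1sub hz1)) with rfl | rfl
        · rfl
        · exact absurd (hd1sub hz1) hv1
      have hB : B.IsPath := hd2p.reverse
      have hC : C.IsPath := by
        apply isPath_append hT.h3.reverse ht2p
        intro z hz3 hz2
        rw [mem_reverse_support] at hz3
        rcases hT.d23 z (ht2sub hz2) hz3 with rfl | rfl
        · rfl
        · exact absurd hz2 hyt2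
      have oB : Odd B.length := by rw [hBdef, Walk.length_reverse]; exact od2
      have oA : Odd A.length := (walk_parity hbip A B).mpr oB
      have oC : Odd C.length := (walk_parity hbip C B).mpr oB
      have dAB : ∀ z ∈ A.support, z ∈ B.support → z = y ∨ z = v := by
        intro z hzA hzB
        rw [Walk.mem_support_append_iff, mem_reverse_support] at hzA
        rw [hBdef, mem_reverse_support] at hzB
        rcases hzA with hz1 | hzQ
        · rcases hT.d12 z (hd1sub hz1) (hd2sub hzB) with rfl | rfl
          · exact absurd hz1 hxd1
          · exact Or.inl rfl
        · rcases hQS z hzQ (Or.inr (Or.inl (hd2sub hzB))) with rfl | rfl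
          · exact absurd (hd2sub hzB) hu2
          · exact Or.inr rfl
      have dAC : ∀ z ∈ A.support, z ∈ C.support → z = y ∨ z = v := by
        intro z hzA hzC
        rw [Walk.mem_support_append_iff, mem_reverse_support] at hzA
        rw [Walk.mem_support_append_iff, mem_reverse_support] at hzC
        rcases hzA with hz1 | hzQ
        · rcases hzC with hz3 | hz2
          · rcases hT.d13 z (hd1sub hz1) hz3 with rfl | rfl
            · exact absurd hz1 hxd1
            · exact Or.inl rfl
          · rcases hT.d12 z (hd1sub hz1) (ht2sub hz2) with rfl | rfl
            · exact absurd hz1 hxd1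
            · exact absurd hz2 hyt2
        · rcases hzC with hz3 | hz2
          · rcases hQS z hzQ (Or.inr (Or.inr hz3)) with rfl | rfl
            · exact absurd hz3 hu3
            · exact Or.inr rfl
          · rcases hQS z hzQ (Or.inr (Or.inl (ht2sub hz2))) with rfl | rfl
            · exact absurd (ht2sub hz2) hu2
            · exact Or.inr rfl
      have dBC : ∀ z ∈ B.support, z ∈ C.support → z = y ∨ z = v := by
        intro z hzB hzC
        rw [hBdef, mem_reverse_support] at hzB
        rw [Walk.mem_support_append_iff, mem_reverse_support] at hzC
        rcases hzC with hz3 | hz2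
        · rcases hT.d23 z (hd2sub hzB) hz3 with rfl | rfl
          · exact absurd hzB hxd2
          · exact Or.inl rfl
        · exact Or.inr (mem_takeUntil_mem_dropUntil hT.h2 hv2 z hz2 hzB)
      have hwA : w ∈ A.support := by
        rw [Walk.mem_support_append_iff]; exact Or.inr hwQ
      have hA2 : 2 ≤ A.length := two_le_length_of_mem hwA hwy hwv
      have lp3 : 1 ≤ p3.length := one_le_length_of_ne hT.hxy p3
      have hC2 : 2 ≤ C.length := by
        rw [hCdef, Walk.length_append, Walk.length_reverse]; omega
      exact ⟨y, v, A, B, C, hyv, hA, hB, hC, oA, oB, oC, dAB, dAC, dBC,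
        edges_disjoint_of_internal hyv hA hB dAB (by omega),
        edges_disjoint_of_internal hyv hA hC dAC (by omega),
        edges_disjoint_of_internal hyv hB hC dBC (by omega),
        Or.inl hwA⟩

set_option maxHeartbeats 2000000 in
lemma extend (hbip : ¬ HasOddCircuit Γ) {x y : W} {p1 p2 p3 : Γ.Walk x y}
    (hT : GoodTheta Γ x y p1 p2 p3) {u v : W} {Q : Γ.Walk u v}
    (hQ : Q.IsPath) (huv : u ≠ v)
    (hu : u ∈ p1.support ∨ u ∈ p2.support ∨ u ∈ p3.support)
    (hv : v ∈ p1.support ∨ v ∈ p2.support ∨ v ∈ p3.support)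
    (hQS : ∀ z ∈ Q.support, (z ∈ p1.support ∨ z ∈ p2.support ∨ z ∈ p3.support) →
      z = u ∨ z = v)
    {w : W} (hwQ : w ∈ Q.support)
    (hw : ¬(w ∈ p1.support ∨ w ∈ p2.support ∨ w ∈ p3.support)) :
    ContainsOddThetaThrough Γ w := by
  have hrevmem : ∀ {c d : W} (p : Γ.Walk c d) (z : W),
      (z ∈ p.reverse.support ↔ z ∈ p.support) := fun p z => mem_reverse_support p z
  -- helper for using a reversed theta
  have hwrev : ¬(w ∈ p1.reverse.support ∨ w ∈ p2.reverse.support ∨ w ∈ p3.reverse.support) := by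
    simpa only [mem_reverse_support] using hw
  have hQSrev : ∀ z ∈ Q.support,
      (z ∈ p1.reverse.support ∨ z ∈ p2.reverse.support ∨ z ∈ p3.reverse.support) →
      z = u ∨ z = v := by
    simpa only [mem_reverse_support] using hQS
  have hQSsym : ∀ z ∈ Q.reverse.support,
      (z ∈ p1.support ∨ z ∈ p2.support ∨ z ∈ p3.support) → z = v ∨ z = u := by
    intro z hz hmem
    rw [mem_reverse_support] at hz
    exact (hQS z hz hmem).symm
  have hwQrev : w ∈ Q.reverse.support := (mem_reverse_support Q w).mpr hwQ
  by_cases hux : u = x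
  · subst hux
    by_cases hvy : v = y
    · subst hvy
      exact coreA hbip hT hQ hQS hwQ hw
    · have hvx : v ≠ u := fun h => huv h.symm
      rcases hv with hv1 | hv2 | hv3
      · exact coreB hbip hT hv1 hvx hvy hQ hQS hwQ hw
      · exact coreB hbip hT.perm12 hv2 hvx hvy hQ
          (fun z hz hmem => hQS z hz (by tauto)) hwQ (by tauto)
      · exact coreB hbip (hT.perm23.perm12) hv3 hvx hvy hQ
          (fun z hz hmem => hQS z hz (by tauto)) hwQ (by tauto)
  · by_cases huy : u = y
    · subst huy
      by_cases hvx : v = x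
      · subst hvx
        exact coreA hbip hT.rev hQ hQSrev hwQ hwrev
      · have hvy : v ≠ u := fun h => huv h.symm
        rcases hv with hv1 | hv2 | hv3
        · exact coreB hbip hT.rev ((mem_reverse_support p1 v).mpr hv1) hvy hvx hQ
            hQSrev hwQ hwrev
        · exact coreB hbip hT.rev.perm12 ((mem_reverse_support p2 v).mpr hv2) hvy hvx hQ
            (fun z hz hmem => hQSrev z hz (by tauto)) hwQ (by tauto)
        · exact coreB hbip (hT.rev.perm23.perm12) ((mem_reverse_support p3 v).mpr hv3) hvy hvx
            hQ (fun z hz hmem => hQSrev z hz (by tauto)) hwQ (by tauto)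
    · -- u is internal to some path
      by_cases hvx : v = x
      · subst hvx
        rcases hu with hu1 | hu2 | hu3
        · exact coreB hbip hT hu1 hux huy hQ.reverse hQSsym hwQrev hw
        · exact coreB hbip hT.perm12 hu2 hux huy hQ.reverse
            (fun z hz hmem => hQSsym z hz (by tauto)) hwQrev (by tauto)
        · exact coreB hbip (hT.perm23.perm12) hu3 hux huy hQ.reverse
            (fun z hz hmem => hQSsym z hz (by tauto)) hwQrev (by tauto)
      · by_cases hvy : v = y
        · subst hvy
          have hQSsymrev : ∀ z ∈ Q.reverse.support,
              (z ∈ p1.reverse.support ∨ z ∈ p2.reverse.support ∨ z ∈ p3.reverse.support) →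
              z = v ∨ z = u := by
            intro z hz hmem
            rw [mem_reverse_support] at hz
            exact (hQSrev z hz hmem).symm
          rcases hu with hu1 | hu2 | hu3
          · exact coreB hbip hT.rev ((mem_reverse_support p1 u).mpr hu1) huy hux hQ.reverse
              hQSsymrev hwQrev hwrev
          · exact coreB hbip hT.rev.perm12 ((mem_reverse_support p2 u).mpr hu2) huy hux
              hQ.reverse (fun z hz hmem => hQSsymrev z hz (by tauto)) hwQrev (by tauto)
          · exact coreB hbip (hT.rev.perm23.perm12) ((mem_reverse_support p3 u).mpr hu3) huy hux
              hQ.reverse (fun z hz hmem => hQSsymrev z hz (by tauto)) hwQrev (by tauto)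
        · -- both internal
          rcases hu with hu1 | hu2 | hu3 <;> rcases hv with hv1 | hv2 | hv3
          · -- same path p1
            by_cases hvt : v ∈ (p1.takeUntil u hu1).support
            · exact coreC_before hbip hT hu1 hux huy hvx hvy huv hvt hQ hQS hwQ hw
            · exact coreC_after hbip hT hu1 hux huy hvx hvy huv
                (mem_dropUntil_of_not_mem_takeUntil hu1 hv1 hvt) hQ hQS hwQ hw
          · exact coreD hbip hT hu1 hv2 hux huy hvx hvy huv hQ hQS hwQ hw
          · exact coreD hbip hT.perm23 hu1 hv3 hux huy hvx hvy huv hQ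
              (fun z hz hmem => hQS z hz (by tauto)) hwQ (by tauto)
          · exact coreD hbip hT.perm12 hu2 hv1 hux huy hvx hvy huv hQ
              (fun z hz hmem => hQS z hz (by tauto)) hwQ (by tauto)
          · -- same path p2
            by_cases hvt : v ∈ (p2.takeUntil u hu2).support
            · exact coreC_before hbip hT.perm12 hu2 hux huy hvx hvy huv hvt hQ
                (fun z hz hmem => hQS z hz (by tauto)) hwQ (by tauto)
            · exact coreC_after hbip hT.perm12 hu2 hux huy hvx hvy huv
                (mem_dropUntil_of_not_mem_takeUntil hu2 hv2 hvt) hQ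
                (fun z hz hmem => hQS z hz (by tauto)) hwQ (by tauto)
          · exact coreD hbip (hT.perm12.perm23) hu2 hv3 hux huy hvx hvy huv hQ
              (fun z hz hmem => hQS z hz (by tauto)) hwQ (by tauto)
          · exact coreD hbip (hT.perm23.perm12) hu3 hv1 hux huy hvx hvy huv hQ
              (fun z hz hmem => hQS z hz (by tauto)) hwQ (by tauto)
          · exact coreD hbip (hT.perm12.perm23.perm12) hu3 hv2 hux huy hvx hvy huv hQ
              (fun z hz hmem => hQS z hz (by tauto)) hwQ (by tauto)
          · -- same path p3
            by_cases hvt : v ∈ (p3.takeUntil u hu3).support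
            · exact coreC_before hbip (hT.perm23.perm12) hu3 hux huy hvx hvy huv hvt hQ
                (fun z hz hmem => hQS z hz (by tauto)) hwQ (by tauto)
            · exact coreC_after hbip (hT.perm23.perm12) hu3 hux huy hvx hvy huv
                (mem_dropUntil_of_not_mem_takeUntil hu3 hv3 hvt) hQ
                (fun z hz hmem => hQS z hz (by tauto)) hwQ (by tauto)

end ThetaAux

/-- if `G` is 2-connected and bipartite and `H` is a 2-connected
subgraph of `G` having an odd ear in `G`, then every vertex of `G` belongs to
an odd theta subgraph of `G`. -/
theorem stmt14 {V : Type*} [Fintype V] (G : SimpleGraph V)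
    (hG : TwoConnected G) (hbip : ¬ HasOddCircuit G)
    (H : G.Subgraph) (hH : TwoConnected H.coe)
    (e : EarData G) (he : IsEar H e) (heodd : Odd e.2.2.length) :
    ∀ w : V, ContainsOddThetaThrough G w := by
  classical
  intro w
  obtain ⟨hconn, hcard, hdel⟩ := hG
  obtain ⟨hHconn, hHcard, hHdel⟩ := hH
  obtain ⟨a, b, r⟩ := e
  obtain ⟨hrpath, hab, haH, hbH, hint, hedge⟩ := he
  have hodd : Odd r.length := heodd
  have hab' : (⟨a, haH⟩ : H.verts) ≠ ⟨b, hbH⟩ := fun h => hab (congrArg Subtype.val h)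
  obtain ⟨p', q', hp', hq', hd', he'⟩ :=
    ThetaAux.menger2 (Γ := H.coe) hHconn hHcard hHdel
      (H.coe.dist ⟨a, haH⟩ ⟨b, hbH⟩) hab' le_rfl
  set p : G.Walk a b := p'.map H.hom with hpdef
  set q : G.Walk a b := q'.map H.hom with hqdef
  have hp : p.IsPath := Walk.map_isPath_of_injective Subgraph.hom_injective hp'
  have hq : q.IsPath := Walk.map_isPath_of_injective Subgraph.hom_injective hq'
  have hpverts : ∀ z ∈ p.support, z ∈ H.verts := by
    intro z hz
    change _ ∈ (p'.map H.hom).support at hz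
    rw [Walk.support_map, List.mem_map] at hz
    obtain ⟨z', _, rfl⟩ := hz
    exact z'.2
  have hqverts : ∀ z ∈ q.support, z ∈ H.verts := by
    intro z hz
    change _ ∈ (q'.map H.hom).support at hz
    rw [Walk.support_map, List.mem_map] at hz
    obtain ⟨z', _, rfl⟩ := hz
    exact z'.2
  have hpq : ∀ z ∈ p.support, z ∈ q.support → z = a ∨ z = b := by
    intro z hz1 hz2
    change _ ∈ (p'.map H.hom).support at hz1
    rw [Walk.support_map, List.mem_map] at hz1
    change _ ∈ (q'.map H.hom).support at hz2
    rw [Walk.support_map, List.mem_map] at hz2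
    obtain ⟨z1, hz1, rfl⟩ := hz1
    obtain ⟨z2, hz2, h12⟩ := hz2
    have hzz : z2 = z1 := Subtype.ext h12
    subst hzz
    rcases hd' z2 hz1 hz2 with rfl | rfl
    · exact Or.inl rfl
    · exact Or.inr rfl
  have hpE : ∀ ed ∈ p.edges, ed ∈ H.edgeSet := by
    intro ed hed
    change _ ∈ (p'.map H.hom).edges at hed
    rw [Walk.edges_map, List.mem_map] at hed
    obtain ⟨ed', hed', rfl⟩ := hed
    revert hed'
    refine Sym2.ind (fun c d => ?_) ed'
    intro hed'
    have hadj : H.coe.Adj c d := p'.adj_of_mem_edges hed'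
    rw [Sym2.map_pair_eq]
    exact hadj
  have hqE : ∀ ed ∈ q.edges, ed ∈ H.edgeSet := by
    intro ed hed
    change _ ∈ (q'.map H.hom).edges at hed
    rw [Walk.edges_map, List.mem_map] at hed
    obtain ⟨ed', hed', rfl⟩ := hed
    revert hed'
    refine Sym2.ind (fun c d => ?_) ed'
    intro hed'
    have hadj : H.coe.Adj c d := q'.adj_of_mem_edges hed'
    rw [Sym2.map_pair_eq]
    exact hadj
  have hepq : ∀ ed ∈ p.edges, ed ∉ q.edges := by
    intro ed hep heq
    change _ ∈ (p'.map H.hom).edges at hep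
    rw [Walk.edges_map, List.mem_map] at hep
    change _ ∈ (q'.map H.hom).edges at heq
    rw [Walk.edges_map, List.mem_map] at heq
    obtain ⟨e1, he1, rfl⟩ := hep
    obtain ⟨e2, he2, h12⟩ := heq
    have hee : e2 = e1 := Sym2.map.injective Subgraph.hom_injective h12
    subst hee
    exact he' e2 he1 he2
  have hpodd : Odd p.length := (ThetaAux.walk_parity hbip p r).mpr hodd
  have hqodd : Odd q.length := (ThetaAux.walk_parity hbip q r).mpr hodd
  have hdpr : ∀ z ∈ p.support, z ∈ r.support → z = a ∨ z = b := by
    intro z hz hzr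
    by_contra hc
    push_neg at hc
    exact hint z hzr hc.1 hc.2 (hpverts z hz)
  have hdqr : ∀ z ∈ q.support, z ∈ r.support → z = a ∨ z = b := by
    intro z hz hzr
    by_contra hc
    push_neg at hc
    exact hint z hzr hc.1 hc.2 (hqverts z hz)
  have hepr : ∀ ed ∈ p.edges, ed ∉ r.edges := fun ed hed hedr => hedge ed hedr (hpE ed hed)
  have heqr : ∀ ed ∈ q.edges, ed ∉ r.edges := fun ed hed hedr => hedge ed hedr (hqE ed hed)
  have hT : ThetaAux.GoodTheta G a b p q r :=
    ⟨hab, hp, hq, hrpath, hpodd, hqodd, hodd, hpq, hdpr, hdqr, hepq, hepr, heqr⟩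
  by_cases hwT : w ∈ p.support ∨ w ∈ q.support ∨ w ∈ r.support
  · exact hT.contains hwT
  · have haS : a ∈ {z | z ∈ p.support ∨ z ∈ q.support ∨ z ∈ r.support} :=
      Or.inl p.start_mem_support
    have hbS : b ∈ {z | z ∈ p.support ∨ z ∈ q.support ∨ z ∈ r.support} :=
      Or.inl p.end_mem_support
    obtain ⟨u, v, Q, hQp, huv, huS, hvS, hQS, hwQ⟩ :=
      ThetaAux.fan hconn hcard hdel (S := {z | z ∈ p.support ∨ z ∈ q.support ∨ z ∈ r.support})
        hwT haS hbS hab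
    exact ThetaAux.extend hbip hT hQp huv huS hvS hQS hwQ hwT
end

section
/- If a 2-connected graph G has two odd circuits sharing at most one vertex, then G contains a totally odd subdivision of C3+. -/
open SimpleGraph

variable {V : Type*}

section OddC3ProofAux
open SimpleGraph Walk
set_option linter.unusedSectionVars false
namespace OddC3Proof
variable {V : Type*} [DecidableEq V] {G : SimpleGraph V}


/-- First hit of a set `T` along a walk ending in `T`. -/
lemma firstHit {a b : V} (p : G.Walk a b) (T : Set V) (hb : b ∈ T) :
    ∃ (t : V) (_ : t ∈ T) (q : G.Walk a t),
      (∀ v ∈ q.support, v ∈ p.support) ∧ (∀ v ∈ q.support, v ∈ T → v = t) ∧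
      (p.IsPath → q.IsPath) := by
  induction p with
  | nil =>
    exact ⟨_, hb, Walk.nil, by simp, by simp +contextual, fun _ => Walk.IsPath.nil⟩
  | @cons a c b h p ih =>
    by_cases haT : a ∈ T
    · exact ⟨a, haT, Walk.nil, by simp, by simp +contextual, fun _ => Walk.IsPath.nil⟩
    · obtain ⟨t, ht, q, hsub, hhit, hpath⟩ := ih hb
      refine ⟨t, ht, Walk.cons h q, ?_, ?_, ?_⟩
      · intro v hv
        rw [support_cons, List.mem_cons] at hv ⊢
        exact hv.imp id fun hv => hsub v hv
      · intro v hv hvT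
        rw [support_cons, List.mem_cons] at hv
        rcases hv with rfl | hv
        · exact absurd hvT haT
        · exact hhit v hv hvT
      · intro hP
        rw [cons_isPath_iff] at hP ⊢
        exact ⟨hpath hP.1, fun hc => hP.2 (hsub a hc)⟩

/-- Trim a path so it meets `A` only at its start and `T` only at its end. -/
lemma trim {a b : V} (p : G.Walk a b) (hp : p.IsPath) (A T : Set V)
    (ha : a ∈ A) (hb : b ∈ T) :
    ∃ (s t : V) (_ : s ∈ A) (_ : t ∈ T) (r : G.Walk s t), r.IsPath ∧
      (∀ v ∈ r.support, v ∈ p.support) ∧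
      (∀ v ∈ r.support, v ∈ A → v = s) ∧ (∀ v ∈ r.support, v ∈ T → v = t) := by
  obtain ⟨t, ht, q, hsub, hhit, hpath⟩ := firstHit p T hb
  obtain ⟨s, hs, q', hsub', hhit', hpath'⟩ := firstHit q.reverse A (by simpa using ha)
  have hq'mem : ∀ v, v ∈ q'.reverse.support ↔ v ∈ q'.support := by
    intro v; rw [support_reverse, List.mem_reverse]
  have hq'q : ∀ v ∈ q'.support, v ∈ q.support := by
    intro v hv
    have := hsub' v hv
    rwa [support_reverse, List.mem_reverse] at this
  refine ⟨s, t, hs, ht, q'.reverse, (hpath' (hpath hp).reverse).reverse, ?_, ?_, ?_⟩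
  · intro v hv; exact hsub v (hq'q v ((hq'mem v).1 hv))
  · intro v hv hvA; exact hhit' v ((hq'mem v).1 hv) hvA
  · intro v hv hvT; exact hhit v (hq'q v ((hq'mem v).1 hv)) hvT

/-- Appending two paths that share only the junction vertex gives a path. -/
lemma isPath_append {a b c : V} {p : G.Walk a b} {q : G.Walk b c}
    (hp : p.IsPath) (hq : q.IsPath)
    (h : ∀ v ∈ p.support, v ∈ q.support → v = b) : (p.append q).IsPath := by
  apply Walk.IsPath.mk'
  rw [support_append]
  apply List.Nodup.append hp.support_nodup (hq.support_nodup.tail)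
  intro v hv hv'
  have hvq : v ∈ q.support := List.mem_of_mem_tail hv'
  have hvb : v = b := h v hv hvq
  have hnd := hq.support_nodup
  rw [q.support_eq_cons, List.nodup_cons] at hnd
  exact hnd.1 (hvb ▸ hv')



/-- The two halves of a path split at a vertex share only that vertex. -/
lemma takeUntil_dropUntil_inter {a b u : V} {p : G.Walk a b} (hp : p.IsPath)
    (h : u ∈ p.support) :
    ∀ v ∈ (p.takeUntil u h).support, v ∈ (p.dropUntil u h).support → v = u := by
  intro v hv hv'
  have hnd := hp.support_nodup
  rw [← take_spec p h, support_append] at hnd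
  have hdisj := List.disjoint_of_nodup_append hnd
  by_contra hne
  apply hdisj hv
  have := (p.dropUntil u h).support_eq_cons
  rw [this, List.mem_cons] at hv'
  rcases hv' with rfl | hv'
  · exact absurd rfl hne
  · exact hv'

lemma end_not_mem_takeUntil {a b u : V} {p : G.Walk a b} (hp : p.IsPath)
    (h : u ∈ p.support) (hub : u ≠ b) : b ∉ (p.takeUntil u h).support := by
  intro hb
  exact hub ((takeUntil_dropUntil_inter hp h b hb (end_mem_support _)).symm)

lemma start_not_mem_dropUntil {a b u : V} {p : G.Walk a b} (hp : p.IsPath)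
    (h : u ∈ p.support) (hua : u ≠ a) : a ∉ (p.dropUntil u h).support := by
  intro ha
  exact hua ((takeUntil_dropUntil_inter hp h a (start_mem_support _) ha).symm)

/-- Splitting a cycle rooted at `s` at another vertex gives two paths. -/
lemma cycle_takeUntil_isPath {s s' : V} {c : G.Walk s s} (hc : c.IsCycle)
    (h : s' ∈ c.support) (hne : s' ≠ s) :
    (c.takeUntil s' h).IsPath ∧ (c.dropUntil s' h).IsPath := by
  set q1 := c.takeUntil s' h with hq1
  set q2 := c.dropUntil s' h with hq2
  have hspec : q1.append q2 = c := take_spec c h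
  have hsupp : c.support = q1.support ++ q2.support.tail := by
    rw [← hspec, support_append]
  have hq1c : q1.support = s :: q1.support.tail := q1.support_eq_cons
  have hcc : c.support = s :: c.support.tail := c.support_eq_cons
  have htail : c.support.tail = q1.support.tail ++ q2.support.tail := by
    have := hsupp
    rw [hcc, hq1c] at this
    exact congrArg List.tail this
  have hnd : (q1.support.tail ++ q2.support.tail).Nodup := htail ▸ hc.support_nodup
  have hdisj := List.disjoint_of_nodup_append hnd
  constructor
  · apply Walk.IsPath.mk'
    rw [hq1c, List.nodup_cons]
    refine ⟨?_, hnd.of_append_left⟩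
    intro hs
    have hs2 : s ∈ q2.support.tail := by
      have : s ∈ q2.support := end_mem_support _
      rw [q2.support_eq_cons, List.mem_cons] at this
      rcases this with h' | h'
      · exact absurd h'.symm hne
      · exact h'
    exact hdisj hs hs2
  · apply Walk.IsPath.mk'
    rw [q2.support_eq_cons, List.nodup_cons]
    refine ⟨?_, hnd.of_append_right⟩
    intro hs
    have hs1 : s' ∈ q1.support.tail := by
      have : s' ∈ q1.support := end_mem_support _
      rw [hq1c, List.mem_cons] at this
      rcases this with h' | h'
      · exact absurd h' hne
      · exact h'
    exact hdisj hs1 hs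

/-- Any vertex of a closed walk lies in the tail of its support. -/
lemma mem_tail_support_of_mem {x : V} {c : G.Walk x x} (hc : ¬ c.Nil) {v : V}
    (h : v ∈ c.support) : v ∈ c.support.tail := by
  rw [c.support_eq_cons, List.mem_cons] at h
  rcases h with rfl | h
  · have hlen : c.support.tail ≠ [] := by
      have h1 : c.support.tail.length = c.length := by
        have := c.length_support
        have ht := c.support.length_tail
        omega
      have h2 : c.length ≠ 0 := by
        intro h0
        exact hc (Walk.nil_iff_length_eq.2 h0)
      intro hnil
      rw [hnil] at h1
      exact h2 h1.symm
    have hx : c.support.tail.getLast hlen = v := by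
      rw [List.getLast_tail]
      exact c.getLast_support
    have hm := List.getLast_mem hlen
    rwa [hx] at hm
  · exact h






lemma length_rotate {x u : V} (c : G.Walk x x) (h : u ∈ c.support) :
    (c.rotate u h).length = c.length := by
  have hspec := congrArg Walk.length (take_spec c h)
  rw [length_append] at hspec
  rw [Walk.rotate, length_append]
  omega

/-- The two arcs of a cycle between two distinct vertices on it. -/
lemma cycle_arcs {x s s' : V} {c : G.Walk x x} (hc : c.IsCycle)
    (hs : s ∈ c.support) (hs' : s' ∈ c.support) (hne : s ≠ s') :
    ∃ (q1 q2 : G.Walk s s'), q1.IsPath ∧ q2.IsPath ∧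
      q1.length + q2.length = c.length ∧
      (∀ v ∈ q1.support, v ∈ c.support) ∧ (∀ v ∈ q2.support, v ∈ c.support) := by
  set c' := c.rotate s hs with hc'def
  have hc' : c'.IsCycle := hc.rotate hs
  have hrot := support_rotate c s hs
  have hmemc' : ∀ v, v ∈ c'.support → v ∈ c.support := by
    intro v hv
    rw [c'.support_eq_cons, List.mem_cons] at hv
    rcases hv with rfl | hv
    · exact hs
    · exact List.mem_of_mem_tail (hrot.mem_iff.1 hv)
  have hs'c' : s' ∈ c'.support := by
    have h1 : s' ∈ c.support.tail := mem_tail_support_of_mem hc.not_nil hs'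
    rw [c'.support_eq_cons, List.mem_cons]
    exact Or.inr (hrot.mem_iff.2 h1)
  obtain ⟨hp1, hp2⟩ := cycle_takeUntil_isPath hc' hs'c' hne.symm
  refine ⟨c'.takeUntil s' hs'c', (c'.dropUntil s' hs'c').reverse, hp1, hp2.reverse, ?_, ?_, ?_⟩
  · have hspec := congrArg Walk.length (take_spec c' hs'c')
    rw [length_append] at hspec
    rw [length_reverse]
    rw [hspec]
    exact length_rotate c hs
  · intro v hv
    exact hmemc' v (support_takeUntil_subset c' hs'c' hv)
  · intro v hv
    rw [support_reverse, List.mem_reverse] at hv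
    exact hmemc' v (support_dropUntil_subset c' hs'c' hv)

/-- Gluing three pairwise almost-disjoint paths into a cycle. -/
lemma cycle_of_three {a b c : V} {p1 : G.Walk a b} {p2 : G.Walk b c} {p3 : G.Walk c a}
    (h1 : p1.IsPath) (h2 : p2.IsPath) (h3 : p3.IsPath)
    (hab : a ≠ b) (hbc : b ≠ c) (hac : a ≠ c)
    (h12 : ∀ v ∈ p1.support, v ∈ p2.support → v = b)
    (h23 : ∀ v ∈ p2.support, v ∈ p3.support → v = c)
    (h13 : ∀ v ∈ p1.support, v ∈ p3.support → v = a) :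
    (p1.append (p2.append p3)).IsCycle := by
  have tail_nd : ((p1.append (p2.append p3)).support).tail.Nodup := by
    have e1 : (p1.append (p2.append p3)).support
        = p1.support ++ (p2.support.tail ++ p3.support.tail) := by
      rw [support_append, tail_support_append]
    have e2 : ((p1.append (p2.append p3)).support).tail
        = p1.support.tail ++ (p2.support.tail ++ p3.support.tail) := by
      rw [e1, List.tail_append_of_ne_nil (support_ne_nil _)]
    rw [e2]
    have nd1 := h1.support_nodup.tail
    have nd2 := h2.support_nodup.tail
    have nd3 := h3.support_nodup.tail
    have not_head : ∀ (u v : V) (q : G.Walk u v), q.IsPath → u ∉ q.support.tail := by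
      intro u v q hq hu
      have := hq.support_nodup
      rw [q.support_eq_cons, List.nodup_cons] at this
      exact this.1 hu
    refine List.Nodup.append nd1 (List.Nodup.append nd2 nd3 ?_) ?_
    · intro v hv hv'
      have hb : v = c := h23 v (List.mem_of_mem_tail hv) (List.mem_of_mem_tail hv')
      subst hb
      exact not_head _ _ p3 h3 hv'
    · intro v hv hv'
      rcases List.mem_append.1 hv' with hv2 | hv3
      · have : v = b := h12 v (List.mem_of_mem_tail hv) (List.mem_of_mem_tail hv2)
        subst this
        exact not_head _ _ p2 h2 hv2
      · have : v = a := h13 v (List.mem_of_mem_tail hv) (List.mem_of_mem_tail hv3)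
        subst this
        exact not_head _ _ p1 h1 hv
  have edge_cross : ∀ {u1 v1 u2 v2 : V} (q : G.Walk u1 v1) (r : G.Walk u2 v2) (w : V),
      (∀ v ∈ q.support, v ∈ r.support → v = w) →
      ∀ e ∈ q.edges, e ∉ r.edges := by
    intro u1 v1 u2 v2 q r w hqr e
    induction e using Sym2.ind with
    | _ y z =>
      intro he her
      have hadj : G.Adj y z := (q.edges_subset_edgeSet he)
      have hy : y = w := hqr y (q.fst_mem_support_of_mem_edges he)
        (r.fst_mem_support_of_mem_edges her)
      have hz : z = w := hqr z (q.snd_mem_support_of_mem_edges he)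
        (r.snd_mem_support_of_mem_edges her)
      exact hadj.ne (hy.trans hz.symm)
  have trail : (p1.append (p2.append p3)).IsTrail := by
    constructor
    rw [edges_append, edges_append]
    have d23 : ∀ e ∈ p2.edges, e ∉ p3.edges := edge_cross p2 p3 c h23
    have d12 : ∀ e ∈ p1.edges, e ∉ p2.edges := edge_cross p1 p2 b h12
    have d13 : ∀ e ∈ p1.edges, e ∉ p3.edges := edge_cross p1 p3 a h13
    refine List.Nodup.append h1.isTrail.edges_nodup
      (List.Nodup.append h2.isTrail.edges_nodup h3.isTrail.edges_nodup d23) ?_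
    intro e he he'
    rcases List.mem_append.1 he' with h' | h'
    · exact d12 e he h'
    · exact d13 e he h'
  have hnenil : p1.append (p2.append p3) ≠ Walk.nil := by
    intro h
    have hl : (p1.append (p2.append p3)).length = 0 := by rw [h]; rfl
    rw [length_append, length_append] at hl
    exact hab (Walk.eq_of_length_eq_zero (p := p1) (by omega))
  exact ⟨⟨trail, hnenil⟩, tail_nd⟩



/-- From connectivity of the vertex-deleted graph, get a path avoiding a vertex. -/
lemma exists_walk_avoiding
    (hG : ∀ v : V, ((⊤ : G.Subgraph).deleteVerts {v}).coe.Connected)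
    (s y z : V) (hy : y ≠ s) (hz : z ≠ s) :
    ∃ r : G.Walk y z, r.IsPath ∧ ∀ v ∈ r.support, v ≠ s := by
  have hc := hG s
  have hy' : y ∈ ((⊤ : G.Subgraph).deleteVerts {s}).verts := by simp [hy]
  have hz' : z ∈ ((⊤ : G.Subgraph).deleteVerts {s}).verts := by simp [hz]
  obtain ⟨w⟩ := hc ⟨y, hy'⟩ ⟨z, hz'⟩
  let w' : G.Walk y z := w.map ((⊤ : G.Subgraph).deleteVerts {s}).hom
  refine ⟨w'.bypass, w'.bypass_isPath, ?_⟩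
  intro v hv
  have hv' : v ∈ w'.support := w'.support_bypass_subset hv
  rw [show w'.support = w.support.map _ from Walk.support_map .., List.mem_map] at hv'
  obtain ⟨⟨v', hv'⟩, _, rfl⟩ := hv'
  simp only [Subgraph.deleteVerts_verts, Set.mem_diff, Set.mem_singleton_iff] at hv'
  exact hv'.2

lemma exists_path (hG : G.Connected) (y z : V) :
    ∃ r : G.Walk y z, r.IsPath := by
  obtain ⟨w⟩ := hG y z
  exact ⟨w.bypass, w.bypass_isPath⟩

/-- Every cycle has a support vertex different from any given vertex. -/
lemma cycle_exists_ne {x : V} {c : G.Walk x x} (hc : c.IsCycle) (s : V) :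
    ∃ y ∈ c.support, y ≠ s := by
  have h3 := hc.three_le_length
  have hlen : c.support.tail.length = c.length := by
    have := c.length_support
    have := c.support.length_tail
    omega
  have h2 : 2 ≤ c.support.tail.length := by omega
  obtain ⟨a, b, l, hl⟩ : ∃ a b l, c.support.tail = a :: b :: l := by
    rcases hlist : c.support.tail with _ | ⟨a, _ | ⟨b, l⟩⟩ <;>
      simp_all <;> omega
  have hnd := hc.support_nodup
  rw [hl, List.nodup_cons, List.mem_cons] at hnd
  have hab : a ≠ b := fun h => hnd.1 (Or.inl h)
  have ha : a ∈ c.support := List.mem_of_mem_tail (by rw [hl]; simp)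
  have hb : b ∈ c.support := List.mem_of_mem_tail (by rw [hl]; simp)
  by_cases has : a = s
  · exact ⟨b, hb, fun h => hab (has.trans h.symm)⟩
  · exact ⟨a, ha, has⟩





/-- Two odd cycles sharing exactly one vertex give an odd C3+. -/
lemma case_one
    (hG2 : ∀ v : V, ((⊤ : G.Subgraph).deleteVerts {v}).coe.Connected)
    {x w v : V} {d : G.Walk x x} {c2 : G.Walk w w}
    (hd : d.IsCycle) (hc2 : c2.IsCycle) (od : Odd d.length) (oc2 : Odd c2.length)
    (hvd : v ∈ d.support) (hvc : v ∈ c2.support)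
    (hshare : ∀ y ∈ d.support, y ∈ c2.support → y = v) :
    _root_.ContainsOddC3Plus G := by
  obtain ⟨y, hy, hys⟩ := cycle_exists_ne hd v
  obtain ⟨z, hz, hzs⟩ := cycle_exists_ne hc2 v
  obtain ⟨p0, hp0, hp0v⟩ := exists_walk_avoiding hG2 v y z hys hzs
  obtain ⟨s', t', hs', ht', r, hr, hrsub, hrA, hrT⟩ :=
    trim p0 hp0 {a | a ∈ d.support} {a | a ∈ c2.support ∧ a ≠ v} hy ⟨hz, hzs⟩
  have hrv : ∀ u ∈ r.support, u ≠ v := fun u hu => hp0v u (hrsub u hu)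
  have hs'v : s' ≠ v := hrv s' (start_mem_support r)
  obtain ⟨ht'c, ht'v⟩ := ht'
  have hrc2 : ∀ u ∈ r.support, u ∈ c2.support → u = t' := fun u hu huc =>
    hrT u hu ⟨huc, hrv u hu⟩
  obtain ⟨q1, q2, hq1, hq2, hql, hq1s, hq2s⟩ := cycle_arcs hd hs' hvd hs'v
  have key : ∀ (qq : G.Walk s' v), qq.IsPath → (∀ u ∈ qq.support, u ∈ d.support) →
      Odd (r.length + qq.length) → _root_.ContainsOddC3Plus G := by
    intro qq hqq hqqd hoddlen
    have hP : (r.reverse.append qq).IsPath := by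
      refine isPath_append hr.reverse hqq ?_
      intro u hu huq
      rw [support_reverse, List.mem_reverse] at hu
      exact hrA u hu (hqqd u huq)
    refine ⟨w, c2, t', v, r.reverse.append qq, hc2, oc2, hP, ?_, ht'v, ht'c, hvc, ?_⟩
    · rwa [length_append, length_reverse]
    · intro u hu huc
      rw [mem_support_append_iff] at hu
      rcases hu with hu | hu
      · rw [support_reverse, List.mem_reverse] at hu
        exact Or.inl (hrc2 u hu huc)
      · exact Or.inr (hshare u (hqqd u hu) huc)
  rcases Nat.even_or_odd (r.length + q1.length) with he | ho
  · refine key q2 hq2 hq2s ?_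
    rcases od with ⟨k, hk⟩
    rcases he with ⟨m, hm⟩
    rw [Nat.odd_iff]
    omega
  · exact key q1 hq1 hq1s ho


/-- Main recursion: odd cycle `d`, odd cycle `c2` disjoint from it, and a
connecting path meeting each only at an endpoint. -/
lemma main_rec
    (hG2 : ∀ v : V, ((⊤ : G.Subgraph).deleteVerts {v}).coe.Connected) :
    ∀ (n : ℕ) {x w s t : V} (d : G.Walk x x) (c2 : G.Walk w w) (q : G.Walk s t),
      q.length = n → d.IsCycle → c2.IsCycle → Odd d.length → Odd c2.length →
      q.IsPath → s ∈ d.support → t ∈ c2.support →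
      (∀ y ∈ d.support, y ∈ c2.support → False) →
      (∀ y ∈ q.support, y ∈ d.support → y = s) →
      (∀ y ∈ q.support, y ∈ c2.support → y = t) →
      _root_.ContainsOddC3Plus G := by
  intro n
  induction n using Nat.strong_induction_on with
  | _ n IH =>
  intro x w s t d c2 q hqn hd hc2 od oc2 hq hsd htc hdisj hqd hqc
  have hst : s ≠ t := fun h => hdisj s hsd (h ▸ htc)
  obtain ⟨y, hy, hys⟩ := cycle_exists_ne hd s
  have hts : t ≠ s := fun h => hst h.symm
  obtain ⟨p0, hp0, hp0s⟩ := exists_walk_avoiding hG2 s y t hys hts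
  obtain ⟨s', t', hs', ht', r, hr, hrsub, hrA, hrT⟩ :=
    trim p0 hp0 {a | a ∈ d.support} {a | (a ∈ q.support ∧ a ≠ s) ∨ a ∈ c2.support}
      hy (Or.inr htc)
  have hrs : ∀ u ∈ r.support, u ≠ s := fun u hu => hp0s u (hrsub u hu)
  have hs's : s' ≠ s := hrs s' (start_mem_support r)
  have ht'd : t' ∉ d.support := by
    intro h
    rcases ht' with ⟨h1, h2⟩ | h1
    · exact h2 (hqd t' h1 h)
    · exact hdisj t' h h1
  have ht's' : t' ≠ s' := fun h => ht'd (h ▸ hs')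
  have hrq : ∀ u ∈ r.support, u ∈ q.support → u = t' := fun u hu huq =>
    hrT u hu (Or.inl ⟨huq, hrs u hu⟩)
  have hrc2 : ∀ u ∈ r.support, u ∈ c2.support → u = t' := fun u hu huc =>
    hrT u hu (Or.inr huc)
  have ht'r : t' ∈ r.support := end_mem_support r
  by_cases ht'c2 : t' ∈ c2.support
  · by_cases ht't : t' = t
    · -- t' = t : glue q, r, and an arc of d into an odd cycle meeting c2 at t
      subst ht't
      obtain ⟨a1, a2, ha1, ha2, hal, ha1s, ha2s⟩ := cycle_arcs hd hs' hsd hs's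
      have key : ∀ (ai : G.Walk s' s), ai.IsPath → (∀ u ∈ ai.support, u ∈ d.support) →
          Odd (q.length + (r.length + ai.length)) → _root_.ContainsOddC3Plus G := by
        intro ai hai haid hodd
        have hE : (q.append (r.reverse.append ai)).IsCycle := by
          refine cycle_of_three hq hr.reverse hai hst ht's' hs's.symm ?_ ?_ ?_
          · intro u hu hu'
            rw [support_reverse, List.mem_reverse] at hu'
            exact hrq u hu' hu
          · intro u hu hu'
            rw [support_reverse, List.mem_reverse] at hu
            exact hrA u hu (haid u hu')
          · intro u hu hu'
            exact hqd u hu (haid u hu')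
        have hEodd : Odd (q.append (r.reverse.append ai)).length := by
          rwa [length_append, length_append, length_reverse]
        refine case_one hG2 hE hc2 hEodd oc2 ?_ htc ?_
        · rw [mem_support_append_iff]
          exact Or.inl (end_mem_support q)
        · intro u hu huc
          rw [mem_support_append_iff, mem_support_append_iff] at hu
          rcases hu with hu | hu | hu
          · exact hqc u hu huc
          · rw [support_reverse, List.mem_reverse] at hu
            exact hrc2 u hu huc
          · exact absurd huc (fun h => hdisj u (haid u hu) h)
      rcases Nat.even_or_odd (q.length + (r.length + a1.length)) with he | ho
      · refine key a2 ha2 ha2s ?_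
        rcases od with ⟨k, hk⟩
        rcases he with ⟨m, hm⟩
        rw [Nat.odd_iff]
        omega
      · exact key a1 ha1 ha1s ho
    · -- t' ≠ t : ear on d through an arc of c2
      obtain ⟨b1, b2, hb1, hb2, hbl, hb1s, hb2s⟩ :=
        cycle_arcs hc2 htc ht'c2 (fun h => ht't h.symm)
      have ht'q : t' ∉ q.support := fun h => ht't (hqc t' h ht'c2)
      have key : ∀ (bi : G.Walk t t'), bi.IsPath → (∀ u ∈ bi.support, u ∈ c2.support) →
          Odd (q.length + (bi.length + r.length)) → _root_.ContainsOddC3Plus G := by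
        intro bi hbi hbic hodd
        have hinner : (bi.append r.reverse).IsPath := by
          refine isPath_append hbi hr.reverse ?_
          intro u hu hu'
          rw [support_reverse, List.mem_reverse] at hu'
          exact (hrc2 u hu' (hbic u hu)).symm ▸ rfl
        have hP : (q.append (bi.append r.reverse)).IsPath := by
          refine isPath_append hq hinner ?_
          intro u hu hu'
          rw [mem_support_append_iff] at hu'
          rcases hu' with hu' | hu'
          · exact hqc u hu (hbic u hu')
          · rw [support_reverse, List.mem_reverse] at hu'
            exact absurd ((hrq u hu' hu) ▸ hu) ht'q
        refine ⟨x, d, s, s', q.append (bi.append r.reverse), hd, od, hP, ?_,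
          hs's.symm, hsd, hs', ?_⟩
        · rwa [length_append, length_append, length_reverse]
        · intro u hu hud
          rw [mem_support_append_iff, mem_support_append_iff] at hu
          rcases hu with hu | hu | hu
          · exact Or.inl (hqd u hu hud)
          · exact absurd hud (fun h => hdisj u h (hbic u hu))
          · rw [support_reverse, List.mem_reverse] at hu
            exact Or.inr (hrA u hu hud)
      rcases Nat.even_or_odd (q.length + (b1.length + r.length)) with he | ho
      · refine key b2 hb2 hb2s ?_
        rcases oc2 with ⟨k, hk⟩
        rcases he with ⟨m, hm⟩
        rw [Nat.odd_iff]
        omega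
      · exact key b1 hb1 hb1s ho
  · -- t' lies in the interior of q : shorten the connecting path and recurse
    have ht'q : t' ∈ q.support ∧ t' ≠ s := by
      rcases ht' with h | h
      · exact h
      · exact absurd h ht'c2
    obtain ⟨ht'qs, ht's⟩ := ht'q
    have ht't : t' ≠ t := fun h => ht'c2 (h ▸ htc)
    have hq1 : (q.takeUntil t' ht'qs).IsPath := hq.takeUntil ht'qs
    have hq2 : (q.dropUntil t' ht'qs).IsPath := hq.dropUntil ht'qs
    have hlen : (q.takeUntil t' ht'qs).length + (q.dropUntil t' ht'qs).length = q.length := by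
      have := congrArg Walk.length (take_spec q ht'qs)
      rwa [length_append] at this
    have hq1pos : (q.takeUntil t' ht'qs).length ≠ 0 := by
      intro h
      exact ht's (Walk.eq_of_length_eq_zero h).symm
    have hsq2 : s ∉ (q.dropUntil t' ht'qs).support :=
      start_not_mem_dropUntil hq ht'qs ht's
    have htq1 : t ∉ (q.takeUntil t' ht'qs).support :=
      end_not_mem_takeUntil hq ht'qs ht't
    have hq1sub : ∀ u ∈ (q.takeUntil t' ht'qs).support, u ∈ q.support :=
      fun u hu => support_takeUntil_subset q ht'qs hu
    have hq2sub : ∀ u ∈ (q.dropUntil t' ht'qs).support, u ∈ q.support :=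
      fun u hu => support_dropUntil_subset q ht'qs hu
    obtain ⟨a1, a2, ha1, ha2, hal, ha1s, ha2s⟩ := cycle_arcs hd hs' hsd hs's
    have key : ∀ (ai : G.Walk s' s), ai.IsPath → (∀ u ∈ ai.support, u ∈ d.support) →
        Odd ((q.takeUntil t' ht'qs).length + (r.length + ai.length)) →
        _root_.ContainsOddC3Plus G := by
      intro ai hai haid hodd
      have hE : ((q.takeUntil t' ht'qs).append (r.reverse.append ai)).IsCycle := by
        refine cycle_of_three hq1 hr.reverse hai ht's.symm ht's' hs's.symm ?_ ?_ ?_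
        · intro u hu hu'
          rw [support_reverse, List.mem_reverse] at hu'
          exact hrq u hu' (hq1sub u hu)
        · intro u hu hu'
          rw [support_reverse, List.mem_reverse] at hu
          exact hrA u hu (haid u hu')
        · intro u hu hu'
          exact hqd u (hq1sub u hu) (haid u hu')
      have hEodd : Odd ((q.takeUntil t' ht'qs).append (r.reverse.append ai)).length := by
        rwa [length_append, length_append, length_reverse]
      refine IH (q.dropUntil t' ht'qs).length (by omega)
        ((q.takeUntil t' ht'qs).append (r.reverse.append ai)) c2 (q.dropUntil t' ht'qs)
        rfl hE hc2 hEodd oc2 hq2 ?_ htc ?_ ?_ ?_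
      · rw [mem_support_append_iff]
        exact Or.inl (end_mem_support _)
      · -- E and c2 are disjoint
        intro u hu huc
        rw [mem_support_append_iff, mem_support_append_iff] at hu
        rcases hu with hu | hu | hu
        · exact htq1 ((hqc u (hq1sub u hu) huc) ▸ hu)
        · rw [support_reverse, List.mem_reverse] at hu
          exact ht'c2 ((hrc2 u hu huc) ▸ huc)
        · exact hdisj u (haid u hu) huc
      · -- q2 meets E only at t'
        intro u hu huE
        rw [mem_support_append_iff, mem_support_append_iff] at huE
        rcases huE with h' | h' | h'
        · exact takeUntil_dropUntil_inter hq ht'qs u h' hu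
        · rw [support_reverse, List.mem_reverse] at h'
          exact hrq u h' (hq2sub u hu)
        · exact absurd ((hqd u (hq2sub u hu) (haid u h')) ▸ hu) hsq2
      · intro u hu huc
        exact hqc u (hq2sub u hu) huc
    rcases Nat.even_or_odd ((q.takeUntil t' ht'qs).length + (r.length + a1.length)) with he | ho
    · refine key a2 ha2 ha2s ?_
      rcases od with ⟨k, hk⟩
      rcases he with ⟨m, hm⟩
      rw [Nat.odd_iff]
      omega
    · exact key a1 ha1 ha1s ho


end OddC3Proof
end OddC3ProofAux

/-- a 2-connected graph with two odd circuits sharing at most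
one vertex contains a totally odd subdivision of `C3+`. -/
theorem stmt16 {V : Type*} [Fintype V] [DecidableEq V] (G : SimpleGraph V)
    (hG : TwoConnected G) (u w : V) (c1 : G.Walk u u) (c2 : G.Walk w w)
    (h1 : c1.IsCycle) (h2 : c2.IsCycle) (o1 : Odd c1.length) (o2 : Odd c2.length)
    (hshare : (c1.support.toFinset ∩ c2.support.toFinset).card ≤ 1) :
    ContainsOddC3Plus G := by
  obtain ⟨hconn, hcard, hdel⟩ := hG
  by_cases hex : ∃ v, v ∈ c1.support ∧ v ∈ c2.support
  · obtain ⟨v, hv1, hv2⟩ := hex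
    have hshare' : ∀ y ∈ c1.support, y ∈ c2.support → y = v := by
      intro y hy1 hy2
      by_contra hne
      have hsub : ({v, y} : Finset V) ⊆ c1.support.toFinset ∩ c2.support.toFinset := by
        intro a ha
        simp only [Finset.mem_insert, Finset.mem_singleton] at ha
        rcases ha with rfl | rfl <;>
          simp [Finset.mem_inter, List.mem_toFinset, hv1, hv2, hy1, hy2]
      have hc := Finset.card_le_card hsub
      rw [Finset.card_pair (fun h => hne h.symm)] at hc
      omega
    exact OddC3Proof.case_one hdel h1 h2 o1 o2 hv1 hv2 hshare'
  · push_neg at hex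
    obtain ⟨p0, hp0⟩ := OddC3Proof.exists_path hconn u w
    obtain ⟨s, t, hs, ht, r, hr, hrsub, hrA, hrT⟩ :=
      OddC3Proof.trim p0 hp0 {a | a ∈ c1.support} {a | a ∈ c2.support}
        (Walk.start_mem_support c1) (Walk.start_mem_support c2)
    exact OddC3Proof.main_rec hdel r.length c1 c2 r rfl h1 h2 o1 o2 hr hs ht
      (fun y hy1 hy2 => hex y hy1 hy2) hrA hrT
end

section
/- Any ear-decomposition of a totally odd subdivision of K4 whose first ear is an odd circuit has exactly three ears, at least two of which are odd. -/
open SimpleGraph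

variable {V : Type*}

lemma ncard_setOf_mem_list_aux {α : Type*} {l : List α} (h : l.Nodup) :
    Set.ncard {x | x ∈ l} = l.length := by
  classical
  rw [show {x | x ∈ l} = (l.toFinset : Set α) from by ext; simp,
    Set.ncard_coe_finset, List.toFinset_card_of_nodup h]

lemma path_vert_count_aux {G : SimpleGraph V} {a b : V} {p : G.Walk a b} (hp : p.IsPath) :
    Set.ncard {v | v ∈ p.support} = p.length + 1 := by
  rw [ncard_setOf_mem_list_aux hp.support_nodup, SimpleGraph.Walk.length_support]

lemma trail_edge_count_aux {G : SimpleGraph V} {a b : V} {p : G.Walk a b} (hp : p.IsTrail) :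
    Set.ncard {e | e ∈ p.edges} = p.length := by
  rw [ncard_setOf_mem_list_aux hp.edges_nodup, SimpleGraph.Walk.length_edges]

lemma cycle_vert_count_aux {G : SimpleGraph V} {u : V} {c : G.Walk u u} (hc : c.IsCycle) :
    Set.ncard {v | v ∈ c.support} = c.length := by
  have hlen : c.support.tail.length = c.length := by
    rw [List.length_tail, c.length_support]; omega
  have hu : u ∈ c.support.tail := by
    cases c with
    | nil => exact absurd hc (by simp)
    | cons h q => simp only [Walk.support_cons, List.tail_cons]; exact q.end_mem_support
  have hset : {v | v ∈ c.support} = {v | v ∈ c.support.tail} := by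
    ext v
    constructor
    · intro hv
      rw [c.support_eq_cons] at hv
      rcases List.mem_cons.mp hv with rfl | hv
      · exact hu
      · exact hv
    · intro hv
      rw [c.support_eq_cons]; exact List.mem_cons_of_mem _ hv
  rw [hset, ncard_setOf_mem_list_aux hc.support_nodup, hlen]

lemma earsUnion_concat {G : SimpleGraph V} {x : V} (base : G.Walk x x)
    (l : List (EarData G)) (e : EarData G) :
    earsUnion base (l ++ [e]) = earsUnion base l ⊔ e.2.2.toSubgraph := by
  simp [earsUnion, List.foldl_append]

lemma decomp_count [Fintype V] {G : SimpleGraph V} (ed : EarDecomposition G) :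
    ∀ i, i ≤ ed.ears.length →
    (earsUnion ed.base (ed.ears.take i)).verts.ncard + i
        = ed.base.length + ((ed.ears.take i).map (fun e => e.2.2.length)).sum ∧
    (earsUnion ed.base (ed.ears.take i)).edgeSet.ncard
        = ed.base.length + ((ed.ears.take i).map (fun e => e.2.2.length)).sum := by
  intro i
  induction i with
  | zero =>
    intro _
    simp only [List.take_zero, List.map_nil, List.sum_nil, Nat.add_zero]
    constructor
    · rw [show earsUnion ed.base [] = ed.base.toSubgraph from rfl,
        Walk.verts_toSubgraph, cycle_vert_count_aux ed.base_cycle]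
    · rw [show earsUnion ed.base [] = ed.base.toSubgraph from rfl,
        Walk.edgeSet_toSubgraph, Walk.edgeSet, trail_edge_count_aux ed.base_cycle.isCircuit.isTrail]
  | succ i ih =>
    intro hi1
    have hi : i < ed.ears.length := hi1
    obtain ⟨ihv, ihe⟩ := ih (le_of_lt hi)
    set e := ed.ears.get ⟨i, hi⟩ with he
    have htake : ed.ears.take (i+1) = ed.ears.take i ++ [e] := by
      rw [List.take_succ, List.getElem?_eq_getElem hi]
      simp [he]
    obtain ⟨hpath, hne, ha, hb, hint, hedge⟩ := ed.ear_cond i hi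
    set H := earsUnion ed.base (ed.ears.take i) with hH
    set w := e.2.2 with hw
    have hlen1 : 1 ≤ w.length := by
      rcases Nat.eq_zero_or_pos w.length with h0 | h; swap; · exact h
      exact absurd (Walk.eq_of_length_eq_zero h0) hne
    have hEU : earsUnion ed.base (ed.ears.take (i+1)) = H ⊔ w.toSubgraph := by
      rw [htake, earsUnion_concat]
    have hsum : ((ed.ears.take (i+1)).map (fun e => e.2.2.length)).sum
        = ((ed.ears.take i).map (fun e => e.2.2.length)).sum + w.length := by
      rw [htake]; simp; rfl
    have hsub : ({e.1, e.2.1} : Set V) ⊆ {v | v ∈ w.support} := by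
      rintro v (rfl | rfl)
      · exact w.start_mem_support
      · exact w.end_mem_support
    constructor
    · rw [hEU, Subgraph.verts_sup, Walk.verts_toSubgraph, hsum]
      have hdiff : {v | v ∈ w.support} \ H.verts = {v | v ∈ w.support} \ {e.1, e.2.1} := by
        ext v
        constructor
        · rintro ⟨hv, hnv⟩
          refine ⟨hv, ?_⟩
          rintro (rfl | rfl)
          · exact hnv ha
          · exact hnv hb
        · rintro ⟨hv, hnab⟩
          refine ⟨hv, hint v hv (fun h => hnab ?_) (fun h => hnab ?_)⟩
          · exact Set.mem_insert_iff.mpr (Or.inl h)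
          · exact Set.mem_insert_iff.mpr (Or.inr (Set.mem_singleton_iff.mpr h))
      have hcard : ({v | v ∈ w.support} \ H.verts).ncard = w.length - 1 := by
        rw [hdiff, Set.ncard_diff hsub (Set.toFinite _), path_vert_count_aux hpath,
          Set.ncard_pair hne]
        omega
      rw [show H.verts ∪ {v | v ∈ w.support}
            = H.verts ∪ ({v | v ∈ w.support} \ H.verts) from (Set.union_diff_self).symm,
        Set.ncard_union_eq Set.disjoint_sdiff_right (Set.toFinite _) (Set.toFinite _), hcard]
      omega
    · have hdisjE : Disjoint H.edgeSet {e | e ∈ w.edges} := Set.disjoint_right.mpr hedge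
      rw [hEU, Subgraph.edgeSet_sup, Walk.edgeSet_toSubgraph, Walk.edgeSet, hsum,
        Set.ncard_union_eq hdisjE (Set.toFinite _) (Set.toFinite _),
        trail_edge_count_aux hpath.isTrail]
      omega

lemma k4_count [Fintype V] {G : SimpleGraph V} (hG : IsTotallyOddK4 G) :
    G.edgeSet.ncard = Nat.card V + 2 ∧ Even G.edgeSet.ncard := by
  obtain ⟨b, p, hbinj, hp, hdisj, htop⟩ := hG
  have h01 : (0 : Fin 4) < 1 := by decide
  have h02 : (0 : Fin 4) < 2 := by decide
  have h03 : (0 : Fin 4) < 3 := by decide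
  have h12 : (1 : Fin 4) < 2 := by decide
  have h13 : (1 : Fin 4) < 3 := by decide
  have h23 : (2 : Fin 4) < 3 := by decide
  -- generic pair-index contradiction
  have key : ∀ (i j i' j' : Fin 4), i < j → i' < j' → (i, j) ≠ (i', j') →
      ∀ u v : V, u ≠ v → (u = b i ∨ u = b j) → (v = b i ∨ v = b j) →
      (u = b i' ∨ u = b j') → (v = b i' ∨ v = b j') → False := by
    intro i j i' j' hij hij' hne u v huv hu hv hu' hv'
    have w1 := (Fin.lt_def).1 hij
    have w2 := (Fin.lt_def).1 hij'
    rcases hu with rfl | rfl <;> rcases hv with h | h <;>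
      rcases hu' with h1 | h1 <;> rcases hv' with h2 | h2 <;>
      first
        | exact huv h.symm
        | (apply hne
           have e1 := congrArg Fin.val (hbinj h1)
           have e2 := congrArg Fin.val (hbinj (h.symm.trans h2))
           rw [Prod.mk.injEq]
           constructor <;> apply Fin.ext <;> omega)
  -- edge sets pairwise disjoint
  have edisj : ∀ (i j : Fin 4) (hij : i < j) (i' j' : Fin 4) (hij' : i' < j'),
      (i, j) ≠ (i', j') →
      Disjoint {e | e ∈ (p i j hij).edges} {e | e ∈ (p i' j' hij').edges} := by
    intro i j hij i' j' hij' hne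
    rw [Set.disjoint_left]
    intro e he he'
    induction e with
    | h u v =>
      have huv : u ≠ v := ((p i j hij).adj_of_mem_edges he).ne
      have hu := hdisj i j hij i' j' hij' hne u
        ((p i j hij).fst_mem_support_of_mem_edges he)
        ((p i' j' hij').fst_mem_support_of_mem_edges he')
      have hv := hdisj i j hij i' j' hij' hne v
        ((p i j hij).snd_mem_support_of_mem_edges he)
        ((p i' j' hij').snd_mem_support_of_mem_edges he')
      exact key i j i' j' hij hij' hne u v huv hu.1 hv.1 hu.2 hv.2
  -- edge lengths
  have hElen : ∀ (i j : Fin 4) (hij : i < j),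
      Set.ncard {e | e ∈ (p i j hij).edges} = (p i j hij).length :=
    fun i j hij => trail_edge_count_aux (hp i j hij).1.isTrail
  -- interior vertex sets
  have hIcard : ∀ (i j : Fin 4) (hij : i < j),
      ({v | v ∈ (p i j hij).support} \ {b i, b j}).ncard = (p i j hij).length - 1 := by
    intro i j hij
    have hsub : ({b i, b j} : Set V) ⊆ {v | v ∈ (p i j hij).support} := by
      rintro v (rfl | rfl)
      · exact (p i j hij).start_mem_support
      · exact (p i j hij).end_mem_support
    rw [Set.ncard_diff hsub (Set.toFinite _), path_vert_count_aux (hp i j hij).1,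
      Set.ncard_pair (fun h => (Fin.lt_iff_val_lt_val.1 hij).ne (congrArg Fin.val (hbinj h)))]
    omega
  -- interiors pairwise disjoint
  have hII : ∀ (i j : Fin 4) (hij : i < j) (i' j' : Fin 4) (hij' : i' < j'),
      (i, j) ≠ (i', j') →
      Disjoint ({v | v ∈ (p i j hij).support} \ {b i, b j})
        ({v | v ∈ (p i' j' hij').support} \ {b i', b j'}) := by
    intro i j hij i' j' hij' hne
    rw [Set.disjoint_left]
    rintro v ⟨hv, hnv⟩ ⟨hv', _⟩
    exact hnv ((hdisj i j hij i' j' hij' hne v hv hv').1.elim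
      (fun h => Set.mem_insert_iff.mpr (Or.inl h))
      (fun h => Set.mem_insert_iff.mpr (Or.inr (Set.mem_singleton_iff.mpr h))))
  -- branch vertices are not interior
  have hbni : ∀ (m i j : Fin 4) (hij : i < j), m ≠ i → m ≠ j →
      b m ∉ {v | v ∈ (p i j hij).support} := by
    intro m i j hij hmi hmj hmem
    rcases lt_or_gt_of_ne hmi with h | h
    · have := (hdisj i j hij m i h (by
        rw [Ne, Prod.mk.injEq]; rintro ⟨hc1, hc2⟩; exact hmi hc1.symm) (b m) hmem
        (p m i h).start_mem_support).1
      rcases this with h' | h'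
      · exact hmi (hbinj h')
      · exact hmj (hbinj h')
    · have := (hdisj i j hij i m h (by
        rw [Ne, Prod.mk.injEq]; rintro ⟨hc1, hc2⟩; exact hmj hc2.symm) (b m) hmem
        (p i m h).end_mem_support).1
      rcases this with h' | h'
      · exact hmi (hbinj h')
      · exact hmj (hbinj h')
  -- range b disjoint from interiors
  have hBI : ∀ (i j : Fin 4) (hij : i < j),
      Disjoint (Set.range b) ({v | v ∈ (p i j hij).support} \ {b i, b j}) := by
    intro i j hij
    rw [Set.disjoint_left]
    rintro v ⟨m, rfl⟩ ⟨hv, hnv⟩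
    rcases eq_or_ne m i with rfl | hmi
    · exact hnv (Set.mem_insert _ _)
    rcases eq_or_ne m j with rfl | hmj
    · exact hnv (Set.mem_insert_iff.mpr (Or.inr rfl))
    exact hbni m i j hij hmi hmj hv
  -- edge cover
  have hEcover : G.edgeSet =
      {e | e ∈ (p 0 1 h01).edges} ∪ ({e | e ∈ (p 0 2 h02).edges} ∪ ({e | e ∈ (p 0 3 h03).edges} ∪
      ({e | e ∈ (p 1 2 h12).edges} ∪ ({e | e ∈ (p 1 3 h13).edges} ∪ {e | e ∈ (p 2 3 h23).edges})))) := by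
    ext e
    simp only [Set.mem_union, Set.mem_setOf_eq]
    constructor
    · intro he
      have h1 : e ∈ (⊤ : G.Subgraph).edgeSet := by rwa [Subgraph.edgeSet_top]
      rw [← htop] at h1
      simp only [Subgraph.edgeSet_iSup, Set.mem_iUnion, Walk.edgeSet_toSubgraph,
        Set.mem_setOf_eq] at h1
      obtain ⟨i, j, hij, he'⟩ := h1
      fin_cases i <;> fin_cases j <;>
        first
          | exact absurd hij (by decide)
          | exact Or.inl he'
          | exact Or.inr (Or.inl he')
          | exact Or.inr (Or.inr (Or.inl he'))
          | exact Or.inr (Or.inr (Or.inr (Or.inl he')))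
          | exact Or.inr (Or.inr (Or.inr (Or.inr (Or.inl he'))))
          | exact Or.inr (Or.inr (Or.inr (Or.inr (Or.inr he'))))
    · rintro (h | h | h | h | h | h)
      exacts [(p 0 1 h01).edges_subset_edgeSet h, (p 0 2 h02).edges_subset_edgeSet h,
        (p 0 3 h03).edges_subset_edgeSet h, (p 1 2 h12).edges_subset_edgeSet h,
        (p 1 3 h13).edges_subset_edgeSet h, (p 2 3 h23).edges_subset_edgeSet h]
  -- edge count
  have hD1 : Disjoint {e | e ∈ (p 0 1 h01).edges}
      ({e | e ∈ (p 0 2 h02).edges} ∪ ({e | e ∈ (p 0 3 h03).edges} ∪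
      ({e | e ∈ (p 1 2 h12).edges} ∪ ({e | e ∈ (p 1 3 h13).edges} ∪
        {e | e ∈ (p 2 3 h23).edges})))) := by
    simp only [Set.disjoint_union_right]
    exact ⟨edisj 0 1 h01 0 2 h02 (by decide), edisj 0 1 h01 0 3 h03 (by decide),
      edisj 0 1 h01 1 2 h12 (by decide), edisj 0 1 h01 1 3 h13 (by decide),
      edisj 0 1 h01 2 3 h23 (by decide)⟩
  have hD2 : Disjoint {e | e ∈ (p 0 2 h02).edges}
      ({e | e ∈ (p 0 3 h03).edges} ∪ ({e | e ∈ (p 1 2 h12).edges} ∪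
      ({e | e ∈ (p 1 3 h13).edges} ∪ {e | e ∈ (p 2 3 h23).edges}))) := by
    simp only [Set.disjoint_union_right]
    exact ⟨edisj 0 2 h02 0 3 h03 (by decide), edisj 0 2 h02 1 2 h12 (by decide),
      edisj 0 2 h02 1 3 h13 (by decide), edisj 0 2 h02 2 3 h23 (by decide)⟩
  have hD3 : Disjoint {e | e ∈ (p 0 3 h03).edges}
      ({e | e ∈ (p 1 2 h12).edges} ∪ ({e | e ∈ (p 1 3 h13).edges} ∪
        {e | e ∈ (p 2 3 h23).edges})) := by
    simp only [Set.disjoint_union_right]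
    exact ⟨edisj 0 3 h03 1 2 h12 (by decide), edisj 0 3 h03 1 3 h13 (by decide),
      edisj 0 3 h03 2 3 h23 (by decide)⟩
  have hD4 : Disjoint {e | e ∈ (p 1 2 h12).edges}
      ({e | e ∈ (p 1 3 h13).edges} ∪ {e | e ∈ (p 2 3 h23).edges}) := by
    simp only [Set.disjoint_union_right]
    exact ⟨edisj 1 2 h12 1 3 h13 (by decide), edisj 1 2 h12 2 3 h23 (by decide)⟩
  have hD5 : Disjoint {e | e ∈ (p 1 3 h13).edges} {e | e ∈ (p 2 3 h23).edges} :=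
    edisj 1 3 h13 2 3 h23 (by decide)
  have hEcard : G.edgeSet.ncard = (p 0 1 h01).length + ((p 0 2 h02).length +
      ((p 0 3 h03).length + ((p 1 2 h12).length + ((p 1 3 h13).length +
        (p 2 3 h23).length)))) := by
    rw [hEcover, Set.ncard_union_eq hD1 (Set.toFinite _) (Set.toFinite _),
      Set.ncard_union_eq hD2 (Set.toFinite _) (Set.toFinite _),
      Set.ncard_union_eq hD3 (Set.toFinite _) (Set.toFinite _),
      Set.ncard_union_eq hD4 (Set.toFinite _) (Set.toFinite _),
      Set.ncard_union_eq hD5 (Set.toFinite _) (Set.toFinite _),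
      hElen 0 1 h01, hElen 0 2 h02, hElen 0 3 h03, hElen 1 2 h12, hElen 1 3 h13,
      hElen 2 3 h23]
  -- vertex cover
  have hVcover : (Set.univ : Set V) = Set.range b ∪
      (({v | v ∈ (p 0 1 h01).support} \ {b 0, b 1}) ∪
      (({v | v ∈ (p 0 2 h02).support} \ {b 0, b 2}) ∪
      (({v | v ∈ (p 0 3 h03).support} \ {b 0, b 3}) ∪
      (({v | v ∈ (p 1 2 h12).support} \ {b 1, b 2}) ∪
      (({v | v ∈ (p 1 3 h13).support} \ {b 1, b 3}) ∪
       ({v | v ∈ (p 2 3 h23).support} \ {b 2, b 3})))))) := by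
    refine Set.eq_of_subset_of_subset ?_ (Set.subset_univ _)
    intro v _
    have h1 : v ∈ (⊤ : G.Subgraph).verts := by rw [Subgraph.verts_top]; trivial
    rw [← htop] at h1
    simp only [Subgraph.verts_iSup, Set.mem_iUnion, Walk.mem_verts_toSubgraph] at h1
    obtain ⟨i, j, hij, hv⟩ := h1
    simp only [Set.mem_union]
    by_cases hvi : v = b i
    · exact Or.inl ⟨i, hvi.symm⟩
    by_cases hvj : v = b j
    · exact Or.inl ⟨j, hvj.symm⟩
    have hvI : v ∈ {v | v ∈ (p i j hij).support} \ {b i, b j} := by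
      refine ⟨hv, fun hm => ?_⟩
      rcases Set.mem_insert_iff.1 hm with h | h
      · exact hvi h
      · exact hvj (Set.mem_singleton_iff.1 h)
    refine Or.inr ?_
    fin_cases i <;> fin_cases j <;>
      first
        | exact absurd hij (by decide)
        | exact Or.inl hvI
        | exact Or.inr (Or.inl hvI)
        | exact Or.inr (Or.inr (Or.inl hvI))
        | exact Or.inr (Or.inr (Or.inr (Or.inl hvI)))
        | exact Or.inr (Or.inr (Or.inr (Or.inr (Or.inl hvI))))
        | exact Or.inr (Or.inr (Or.inr (Or.inr (Or.inr hvI))))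
  -- vertex disjointness
  have hV1 : Disjoint (Set.range b)
      (({v | v ∈ (p 0 1 h01).support} \ {b 0, b 1}) ∪
      (({v | v ∈ (p 0 2 h02).support} \ {b 0, b 2}) ∪
      (({v | v ∈ (p 0 3 h03).support} \ {b 0, b 3}) ∪
      (({v | v ∈ (p 1 2 h12).support} \ {b 1, b 2}) ∪
      (({v | v ∈ (p 1 3 h13).support} \ {b 1, b 3}) ∪
       ({v | v ∈ (p 2 3 h23).support} \ {b 2, b 3})))))) := by
    simp only [Set.disjoint_union_right]
    exact ⟨hBI 0 1 h01, hBI 0 2 h02, hBI 0 3 h03, hBI 1 2 h12, hBI 1 3 h13, hBI 2 3 h23⟩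
  have hV2 : Disjoint ({v | v ∈ (p 0 1 h01).support} \ {b 0, b 1})
      (({v | v ∈ (p 0 2 h02).support} \ {b 0, b 2}) ∪
      (({v | v ∈ (p 0 3 h03).support} \ {b 0, b 3}) ∪
      (({v | v ∈ (p 1 2 h12).support} \ {b 1, b 2}) ∪
      (({v | v ∈ (p 1 3 h13).support} \ {b 1, b 3}) ∪
       ({v | v ∈ (p 2 3 h23).support} \ {b 2, b 3}))))) := by
    simp only [Set.disjoint_union_right]
    exact ⟨hII 0 1 h01 0 2 h02 (by decide), hII 0 1 h01 0 3 h03 (by decide),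
      hII 0 1 h01 1 2 h12 (by decide), hII 0 1 h01 1 3 h13 (by decide),
      hII 0 1 h01 2 3 h23 (by decide)⟩
  have hV3 : Disjoint ({v | v ∈ (p 0 2 h02).support} \ {b 0, b 2})
      (({v | v ∈ (p 0 3 h03).support} \ {b 0, b 3}) ∪
      (({v | v ∈ (p 1 2 h12).support} \ {b 1, b 2}) ∪
      (({v | v ∈ (p 1 3 h13).support} \ {b 1, b 3}) ∪
       ({v | v ∈ (p 2 3 h23).support} \ {b 2, b 3})))) := by
    simp only [Set.disjoint_union_right]
    exact ⟨hII 0 2 h02 0 3 h03 (by decide), hII 0 2 h02 1 2 h12 (by decide),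
      hII 0 2 h02 1 3 h13 (by decide), hII 0 2 h02 2 3 h23 (by decide)⟩
  have hV4 : Disjoint ({v | v ∈ (p 0 3 h03).support} \ {b 0, b 3})
      (({v | v ∈ (p 1 2 h12).support} \ {b 1, b 2}) ∪
      (({v | v ∈ (p 1 3 h13).support} \ {b 1, b 3}) ∪
       ({v | v ∈ (p 2 3 h23).support} \ {b 2, b 3}))) := by
    simp only [Set.disjoint_union_right]
    exact ⟨hII 0 3 h03 1 2 h12 (by decide), hII 0 3 h03 1 3 h13 (by decide),
      hII 0 3 h03 2 3 h23 (by decide)⟩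
  have hV5 : Disjoint ({v | v ∈ (p 1 2 h12).support} \ {b 1, b 2})
      (({v | v ∈ (p 1 3 h13).support} \ {b 1, b 3}) ∪
       ({v | v ∈ (p 2 3 h23).support} \ {b 2, b 3})) := by
    simp only [Set.disjoint_union_right]
    exact ⟨hII 1 2 h12 1 3 h13 (by decide), hII 1 2 h12 2 3 h23 (by decide)⟩
  have hV6 : Disjoint ({v | v ∈ (p 1 3 h13).support} \ {b 1, b 3})
      ({v | v ∈ (p 2 3 h23).support} \ {b 2, b 3}) :=
    hII 1 3 h13 2 3 h23 (by decide)
  have hBcard : (Set.range b).ncard = 4 := by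
    rw [← Set.image_univ, Set.ncard_image_of_injective _ hbinj, Set.ncard_univ,
      Nat.card_eq_fintype_card, Fintype.card_fin]
  have hVcard : Nat.card V = 4 + (((p 0 1 h01).length - 1) + (((p 0 2 h02).length - 1) +
      (((p 0 3 h03).length - 1) + (((p 1 2 h12).length - 1) + (((p 1 3 h13).length - 1) +
        ((p 2 3 h23).length - 1)))))) := by
    rw [← Set.ncard_univ, hVcover,
      Set.ncard_union_eq hV1 (Set.toFinite _) (Set.toFinite _),
      Set.ncard_union_eq hV2 (Set.toFinite _) (Set.toFinite _),
      Set.ncard_union_eq hV3 (Set.toFinite _) (Set.toFinite _),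
      Set.ncard_union_eq hV4 (Set.toFinite _) (Set.toFinite _),
      Set.ncard_union_eq hV5 (Set.toFinite _) (Set.toFinite _),
      Set.ncard_union_eq hV6 (Set.toFinite _) (Set.toFinite _),
      hBcard, hIcard 0 1 h01, hIcard 0 2 h02, hIcard 0 3 h03, hIcard 1 2 h12,
      hIcard 1 3 h13, hIcard 2 3 h23]
  obtain ⟨k1, hk1⟩ := (hp 0 1 h01).2
  obtain ⟨k2, hk2⟩ := (hp 0 2 h02).2
  obtain ⟨k3, hk3⟩ := (hp 0 3 h03).2
  obtain ⟨k4, hk4⟩ := (hp 1 2 h12).2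
  obtain ⟨k5, hk5⟩ := (hp 1 3 h13).2
  obtain ⟨k6, hk6⟩ := (hp 2 3 h23).2
  constructor
  · omega
  · rw [Nat.even_iff]; omega


/-- any ear-decomposition of a totally odd subdivision of `K₄`
whose first ear is an odd circuit has exactly three ears, at least two of
which are odd. -/
theorem stmt17 {V : Type*} [Fintype V] (G : SimpleGraph V)
    (hG : IsTotallyOddK4 G) (ed : EarDecomposition G)
    (hodd : Odd ed.base.length) :
    ed.ears.length + 1 = 3 ∧
    2 ≤ (ed.base.length :: ed.ears.map (fun e => e.2.2.length)).countP
          (fun n => n % 2 == 1) := by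
  obtain ⟨hE, hEven⟩ := k4_count hG
  have hd := decomp_count ed ed.ears.length le_rfl
  rw [List.take_length, ed.union_top] at hd
  obtain ⟨hdv, hde⟩ := hd
  rw [Subgraph.verts_top, Set.ncard_univ] at hdv
  rw [Subgraph.edgeSet_top] at hde
  have hk : ed.ears.length = 2 := by omega
  obtain ⟨e1, e2, hears⟩ := List.length_eq_two.mp hk
  have hS : (ed.ears.map (fun e => e.2.2.length)).sum
      = e1.2.2.length + e2.2.2.length := by rw [hears]; simp
  have hL : ed.base.length % 2 = 1 := Nat.odd_iff.mp hodd
  rw [Nat.even_iff] at hEven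
  have hodd2 : e1.2.2.length % 2 = 1 ∨ e2.2.2.length % 2 = 1 := by omega
  refine ⟨by omega, ?_⟩
  rw [hears]
  simp only [List.map_cons, List.map_nil, List.countP_cons, List.countP_nil]
  have hLb : (ed.base.length % 2 == 1) = true := by simp [hL]
  rcases hodd2 with h | h
  · have hb : (e1.2.2.length % 2 == 1) = true := by simp [h]
    rw [hLb, hb]
    split_ifs <;> simp_all
  · have hb : (e2.2.2.length % 2 == 1) = true := by simp [h]
    rw [hLb, hb]
    split_ifs <;> simp_all
end

section
/- If a 2-connected graph G has an odd ear-decomposition (one in which every ear has odd length), then G is factor-critical, i.e., G − v has a perfect matching for every vertex v of G. -/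
open SimpleGraph

variable {V : Type*}

namespace EarHelper

variable {G : SimpleGraph V}


lemma matching_sup {M M' : G.Subgraph} (hM : M.IsMatching) (hM' : M'.IsMatching)
    (h : Disjoint M.verts M'.verts) : (M ⊔ M').IsMatching :=
  hM.sup hM' (by rwa [hM.support_eq_verts, hM'.support_eq_verts])

lemma bot_matching : (⊥ : G.Subgraph).IsMatching := by
  intro v hv
  exact absurd hv (Set.notMem_empty v)

/-- perfect matching of an odd path -/
lemma odd_path_matching : ∀ (n : ℕ) {a b : V} (p : G.Walk a b), p.length ≤ n →
    p.IsPath → Odd p.length →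
    ∃ M : G.Subgraph, M.IsMatching ∧ M.verts = {w | w ∈ p.support} := by
  intro n
  induction n with
  | zero =>
    intro a b p hl hp ho
    rw [Nat.le_zero.mp hl] at ho
    simp at ho
  | succ n IH =>
    intro a b p hl hp ho
    cases p with
    | nil => simp at ho
    | @cons _ s1 _ h q =>
      cases q with
      | nil =>
        refine ⟨G.subgraphOfAdj h, Subgraph.IsMatching.subgraphOfAdj h, ?_⟩
        ext w
        simp [Set.mem_insert_iff]
      | @cons _ s2 _ h2 r =>
        have hr : r.IsPath := hp.of_cons.of_cons
        have hro : Odd r.length := by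
          rcases ho with ⟨k, hk⟩
          simp only [Walk.length_cons] at hk
          exact ⟨k - 1, by omega⟩
        have hrl : r.length ≤ n := by
          simp only [Walk.length_cons] at hl
          omega
        obtain ⟨M, hM, hMv⟩ := IH r hrl hr hro
        have hnd := hp.support_nodup
        simp only [Walk.support_cons, List.nodup_cons, List.mem_cons] at hnd
        refine ⟨G.subgraphOfAdj h ⊔ M, ?_, ?_⟩
        · apply matching_sup (Subgraph.IsMatching.subgraphOfAdj h) hM
          rw [hMv]
          rw [Set.disjoint_left]
          intro w hw hw'
          simp only [subgraphOfAdj_verts, Set.mem_insert_iff, Set.mem_singleton_iff] at hw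
          simp only [Set.mem_setOf_eq] at hw'
          rcases hw with rfl | rfl
          · exact hnd.1 (Or.inr hw')
          · exact hnd.2.1 hw'
        · ext w
          simp only [Subgraph.verts_sup, subgraphOfAdj_verts, hMv, Set.mem_union,
            Set.mem_insert_iff, Set.mem_singleton_iff, Set.mem_setOf_eq,
            Walk.support_cons, List.mem_cons]
          tauto

/-- matching of an even path covering everything but its start -/
lemma even_path_matching {a b : V} (p : G.Walk a b) (hp : p.IsPath)
    (he : Even p.length) :
    ∃ M : G.Subgraph, M.IsMatching ∧ M.verts = {w | w ∈ p.support} \ {a} := by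
  cases p with
  | nil =>
    refine ⟨⊥, bot_matching, ?_⟩
    ext w
    simp
  | @cons _ s1 _ h q =>
    have hq : q.IsPath := hp.of_cons
    have hqo : Odd q.length := by
      rcases he with ⟨k, hk⟩
      simp only [Walk.length_cons] at hk
      exact ⟨k - 1, by omega⟩
    obtain ⟨M, hM, hMv⟩ := odd_path_matching q.length q le_rfl hq hqo
    have hnd := hp.support_nodup
    simp only [Walk.support_cons, List.nodup_cons] at hnd
    refine ⟨M, hM, ?_⟩
    rw [hMv]
    ext w
    simp only [Set.mem_setOf_eq, Set.mem_diff, Set.mem_singleton_iff,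
      Walk.support_cons, List.mem_cons]
    constructor
    · intro hw
      refine ⟨Or.inr hw, ?_⟩
      rintro rfl
      exact hnd.1 hw
    · rintro ⟨hw | hw, hne⟩
      · exact absurd hw hne
      · exact hw

/-- matching of an odd path covering exactly its interior -/
lemma odd_path_internal_matching {a b : V} (p : G.Walk a b) (hp : p.IsPath)
    (ho : Odd p.length) :
    ∃ M : G.Subgraph, M.IsMatching ∧ M.verts = {w | w ∈ p.support} \ {a, b} := by
  cases p with
  | nil => simp at ho
  | @cons _ s1 _ h q =>
    have hq : q.IsPath := hp.of_cons
    have hqe : Even q.reverse.length := by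
      rcases ho with ⟨k, hk⟩
      simp only [Walk.length_cons] at hk
      rw [Walk.length_reverse]
      exact ⟨k, by omega⟩
    obtain ⟨M, hM, hMv⟩ := even_path_matching q.reverse hq.reverse hqe
    have hnd := hp.support_nodup
    simp only [Walk.support_cons, List.nodup_cons] at hnd
    refine ⟨M, hM, ?_⟩
    rw [hMv]
    ext w
    simp only [Set.mem_setOf_eq, Set.mem_diff, Set.mem_singleton_iff,
      Walk.support_reverse, List.mem_reverse, Walk.support_cons, List.mem_cons,
      Set.mem_insert_iff]
    constructor
    · rintro ⟨hw, hne⟩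
      refine ⟨Or.inr hw, ?_⟩
      rintro (rfl | rfl)
      · exact hnd.1 hw
      · exact hne rfl
    · rintro ⟨hw | hw, hne⟩
      · exact absurd (Or.inl hw) hne
      · exact ⟨hw, fun h' => hne (Or.inr h')⟩

/-- a matching of an odd cycle covering all but a given vertex -/
lemma odd_cycle_matching [DecidableEq V] {x : V} (c : G.Walk x x) (hc : c.IsCycle)
    (ho : Odd c.length) {v : V} (hv : v ∈ c.support) :
    ∃ M : G.Subgraph, M.IsMatching ∧ M.verts = {w | w ∈ c.support} \ {v} := by
  have hc' := hc.rotate hv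
  have hsupp : {w | w ∈ (c.rotate v hv).support} = {w | w ∈ c.support} := by
    have h1 := (Walk.verts_toSubgraph (c.rotate v hv)).symm
    have h2 := Walk.verts_toSubgraph c
    rw [Walk.toSubgraph_rotate] at h1
    exact h1.trans h2
  have hlen : (c.rotate v hv).length = c.length := by
    have := congrArg Walk.length (c.take_spec hv)
    rw [Walk.length_append] at this
    simp only [Walk.rotate, Walk.length_append]
    omega
  set c' := c.rotate v hv with hc'def
  clear_value c'
  rw [← hsupp]
  cases c' with
  | nil => exact absurd rfl hc'.ne_nil
  | @cons _ s1 _ h q =>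
    have hq : q.IsPath := ((Walk.cons_isCycle_iff q h).mp hc').1
    have hqe : Even q.reverse.length := by
      rcases ho with ⟨k, hk⟩
      rw [← hlen] at hk
      simp only [Walk.length_cons] at hk
      rw [Walk.length_reverse]
      exact ⟨k, by omega⟩
    obtain ⟨M, hM, hMv⟩ := even_path_matching q.reverse hq.reverse hqe
    refine ⟨M, hM, ?_⟩
    rw [hMv]
    ext w
    simp only [Set.mem_setOf_eq, Set.mem_diff, Set.mem_singleton_iff,
      Walk.support_reverse, List.mem_reverse, Walk.support_cons, List.mem_cons]
    constructor
    · rintro ⟨hw, hne⟩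
      exact ⟨Or.inr hw, hne⟩
    · rintro ⟨hw | hw, hne⟩
      · exact ⟨(hw ▸ q.end_mem_support : w ∈ q.support), hne⟩
      · exact ⟨hw, hne⟩


lemma ear_step [DecidableEq V] {S : Set V} {a b : V} (p : G.Walk a b)
    (hp : p.IsPath) (hab : a ≠ b) (ha : a ∈ S) (hb : b ∈ S)
    (hint : ∀ w ∈ p.support, w ≠ a → w ≠ b → w ∉ S)
    (ho : Odd p.length)
    (IH : ∀ v ∈ S, ∃ M : G.Subgraph, M.IsMatching ∧ M.verts = S \ {v}) :
    ∀ v ∈ S ∪ {w | w ∈ p.support}, ∃ M : G.Subgraph, M.IsMatching ∧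
      M.verts = (S ∪ {w | w ∈ p.support}) \ {v} := by
  intro v hv
  by_cases hvS : v ∈ S
  · obtain ⟨MH, hMH, hMHv⟩ := IH v hvS
    obtain ⟨Mi, hMi, hMiv⟩ := odd_path_internal_matching p hp ho
    refine ⟨MH ⊔ Mi, matching_sup hMH hMi ?_, ?_⟩
    · rw [hMHv, hMiv, Set.disjoint_left]
      rintro w ⟨hwS, -⟩ ⟨hwp, hwab⟩
      simp only [Set.mem_insert_iff, Set.mem_singleton_iff, not_or] at hwab
      exact hint w hwp hwab.1 hwab.2 hwS
    · rw [Subgraph.verts_sup, hMHv, hMiv]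
      ext w
      simp only [Set.mem_union, Set.mem_diff, Set.mem_singleton_iff,
        Set.mem_setOf_eq, Set.mem_insert_iff, not_or]
      constructor
      · rintro (⟨hwS, hwv⟩ | ⟨hwp, hwa, hwb⟩)
        · exact ⟨Or.inl hwS, hwv⟩
        · exact ⟨Or.inr hwp, fun h => hint w hwp hwa hwb (h ▸ hvS)⟩
      · rintro ⟨hwS | hwp, hwv⟩
        · exact Or.inl ⟨hwS, hwv⟩
        · by_cases hwS : w ∈ S
          · exact Or.inl ⟨hwS, hwv⟩
          · refine Or.inr ⟨hwp, fun h => hwS (h ▸ ha), fun h => hwS (h ▸ hb)⟩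
  · -- v is an internal vertex of the ear
    have hvp : v ∈ p.support := by
      rcases hv with h | h
      · exact absurd h hvS
      · exact h
    have hva : v ≠ a := fun h => hvS (h ▸ ha)
    have hvb : v ≠ b := fun h => hvS (h ▸ hb)
    set p1 := p.takeUntil v hvp with hp1def
    set p2 := p.dropUntil v hvp with hp2def
    have hspec : p1.append p2 = p := p.take_spec hvp
    have hlen : p1.length + p2.length = p.length := by
      have := congrArg Walk.length hspec
      rwa [Walk.length_append] at this
    have hp1p : p1.IsPath := hp.takeUntil hvp
    have hp2p : p2.IsPath := hp.dropUntil hvp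
    have hsupp : p1.support ++ p2.support.tail = p.support := by
      have := congrArg Walk.support hspec
      rwa [Walk.support_append] at this
    have hnd : (p1.support ++ p2.support.tail).Nodup := by
      rw [hsupp]; exact hp.support_nodup
    have hdisj := List.disjoint_of_nodup_append hnd
    have hmem_p : ∀ w, w ∈ p.support ↔ w ∈ p1.support ∨ w ∈ p2.support := by
      intro w
      rw [← hsupp, List.mem_append]
      constructor
      · rintro (h | h)
        · exact Or.inl h
        · exact Or.inr (List.mem_of_mem_tail h)
      · rintro (h | h)
        · exact Or.inl h
        · rw [p2.support_eq_cons, List.mem_cons] at h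
          rcases h with rfl | h
          · exact Or.inl p1.end_mem_support
          · exact Or.inr h
    have hinter : ∀ w, w ∈ p1.support → w ∈ p2.support → w = v := by
      intro w h1 h2
      by_contra hne
      rw [p2.support_eq_cons, List.mem_cons] at h2
      rcases h2 with rfl | h2
      · exact hne rfl
      · exact hdisj h1 h2
    have hbp1 : b ∉ p1.support := fun h => hvb ((hinter b h p2.end_mem_support).symm)
    have hap2 : a ∉ p2.support := fun h => hva ((hinter a p1.start_mem_support h).symm)
    have hp1sub : ∀ w ∈ p1.support, w ∈ p.support :=
      fun w h => (hmem_p w).mpr (Or.inl h)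
    have hp2sub : ∀ w ∈ p2.support, w ∈ p.support :=
      fun w h => (hmem_p w).mpr (Or.inr h)
    rcases Nat.even_or_odd p1.length with h1e | h1o
    · -- p1 even, p2 odd; use IH at a
      have h2o : Odd p2.length := by
        rcases ho with ⟨k, hk⟩; rcases h1e with ⟨m, hm⟩
        exact ⟨k - m, by omega⟩
      obtain ⟨MH, hMH, hMHv⟩ := IH a ha
      have h1e' : Even p1.reverse.length := by rwa [Walk.length_reverse]
      obtain ⟨M1, hM1, hM1v⟩ := even_path_matching p1.reverse hp1p.reverse h1e'
      obtain ⟨M2, hM2, hM2v⟩ := odd_path_internal_matching p2 hp2p h2o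
      have hM1v' : M1.verts = {w | w ∈ p1.support} \ {v} := by
        rw [hM1v]; ext w; simp [Walk.support_reverse]
      -- membership characterizations
      have hM1mem : ∀ w ∈ M1.verts, w ∈ p1.support ∧ w ≠ v := by
        intro w hw; rw [hM1v'] at hw; exact hw
      have hM2mem : ∀ w ∈ M2.verts, w ∈ p2.support ∧ w ≠ v ∧ w ≠ b := by
        intro w hw
        rw [hM2v] at hw
        obtain ⟨h1, h2⟩ := hw
        simp only [Set.mem_insert_iff, Set.mem_singleton_iff, not_or] at h2
        exact ⟨h1, h2.1, h2.2⟩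
      refine ⟨MH ⊔ M1 ⊔ M2, ?_, ?_⟩
      · refine matching_sup (matching_sup hMH hM1 ?_) hM2 ?_
        · rw [hMHv, Set.disjoint_left]
          rintro w ⟨hwS, hwa⟩ hw1
          obtain ⟨hw1p, hwv⟩ := hM1mem w hw1
          exact hint w (hp1sub w hw1p) hwa (fun h => hbp1 (h ▸ hw1p)) hwS
        · rw [Subgraph.verts_sup, Set.disjoint_left]
          rintro w (hwH | hw1) hw2 <;>
            obtain ⟨hw2p, hwv, hwb⟩ := hM2mem w hw2
          · rw [hMHv] at hwH
            exact hint w (hp2sub w hw2p) (fun h => hap2 (h ▸ hw2p)) hwb hwH.1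
          · obtain ⟨hw1p, -⟩ := hM1mem w hw1
            exact hwv (hinter w hw1p hw2p)
      · rw [Subgraph.verts_sup, Subgraph.verts_sup, hMHv, hM1v', hM2v]
        ext w
        simp only [Set.mem_union, Set.mem_diff, Set.mem_singleton_iff,
          Set.mem_setOf_eq, Set.mem_insert_iff, not_or]
        constructor
        · rintro ((⟨hwS, hwa⟩ | ⟨hwp, hwv⟩) | ⟨hwp, hwv, hwb⟩)
          · exact ⟨Or.inl hwS, fun h => hvS (h ▸ hwS)⟩
          · exact ⟨Or.inr (hp1sub w hwp), hwv⟩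
          · exact ⟨Or.inr (hp2sub w hwp), hwv⟩
        · rintro ⟨hwS | hwp, hwv⟩
          · by_cases hwa : w = a
            · subst hwa
              exact Or.inl (Or.inr ⟨p1.start_mem_support, hwv⟩)
            · exact Or.inl (Or.inl ⟨hwS, hwa⟩)
          · rcases (hmem_p w).mp hwp with h1 | h2
            · exact Or.inl (Or.inr ⟨h1, hwv⟩)
            · by_cases hwb : w = b
              · exact Or.inl (Or.inl ⟨hwb ▸ hb, hwb ▸ hab.symm⟩)
              · exact Or.inr ⟨h2, hwv, hwb⟩
    · -- p1 odd, p2 even; use IH at b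
      have h2e : Even p2.length := by
        rcases ho with ⟨k, hk⟩; rcases h1o with ⟨m, hm⟩
        exact ⟨k - m, by omega⟩
      obtain ⟨MH, hMH, hMHv⟩ := IH b hb
      obtain ⟨M1, hM1, hM1v⟩ := odd_path_internal_matching p1 hp1p h1o
      obtain ⟨M2, hM2, hM2v⟩ := even_path_matching p2 hp2p h2e
      have hM1mem : ∀ w ∈ M1.verts, w ∈ p1.support ∧ w ≠ a ∧ w ≠ v := by
        intro w hw
        rw [hM1v] at hw
        obtain ⟨h1, h2⟩ := hw
        simp only [Set.mem_insert_iff, Set.mem_singleton_iff, not_or] at h2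
        exact ⟨h1, h2.1, h2.2⟩
      have hM2mem : ∀ w ∈ M2.verts, w ∈ p2.support ∧ w ≠ v := by
        intro w hw; rw [hM2v] at hw; exact hw
      refine ⟨MH ⊔ M1 ⊔ M2, ?_, ?_⟩
      · refine matching_sup (matching_sup hMH hM1 ?_) hM2 ?_
        · rw [hMHv, Set.disjoint_left]
          rintro w ⟨hwS, hwb⟩ hw1
          obtain ⟨hw1p, hwa, hwv⟩ := hM1mem w hw1
          exact hint w (hp1sub w hw1p) hwa (fun h => hbp1 (h ▸ hw1p)) hwS
        · rw [Subgraph.verts_sup, Set.disjoint_left]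
          rintro w (hwH | hw1) hw2 <;>
            obtain ⟨hw2p, hwv⟩ := hM2mem w hw2
          · rw [hMHv] at hwH
            exact hint w (hp2sub w hw2p) (fun h => hap2 (h ▸ hw2p))
              (fun h => hwH.2 h) hwH.1
          · obtain ⟨hw1p, -, -⟩ := hM1mem w hw1
            exact hwv (hinter w hw1p hw2p)
      · rw [Subgraph.verts_sup, Subgraph.verts_sup, hMHv, hM1v, hM2v]
        ext w
        simp only [Set.mem_union, Set.mem_diff, Set.mem_singleton_iff,
          Set.mem_setOf_eq, Set.mem_insert_iff, not_or]
        constructor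
        · rintro ((⟨hwS, hwb⟩ | ⟨hwp, hwa, hwv⟩) | ⟨hwp, hwv⟩)
          · exact ⟨Or.inl hwS, fun h => hvS (h ▸ hwS)⟩
          · exact ⟨Or.inr (hp1sub w hwp), hwv⟩
          · exact ⟨Or.inr (hp2sub w hwp), hwv⟩
        · rintro ⟨hwS | hwp, hwv⟩
          · by_cases hwb : w = b
            · subst hwb
              exact Or.inr ⟨p2.end_mem_support, hwv⟩
            · exact Or.inl (Or.inl ⟨hwS, hwb⟩)
          · rcases (hmem_p w).mp hwp with h1 | h2
            · by_cases hwa : w = a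
              · exact Or.inl (Or.inl ⟨hwa ▸ ha, hwa ▸ hab⟩)
              · exact Or.inl (Or.inr ⟨h1, hwa, hwv⟩)
            · exact Or.inr ⟨h2, hwv⟩


end EarHelper

open EarHelper in
lemma ears_good [DecidableEq V] {G : SimpleGraph V} {x : V} {base : G.Walk x x}
    (hb : base.IsCycle) (hob : Odd base.length) :
    ∀ l : List (EarData G),
      (∀ i (h : i < l.length), IsEar (earsUnion base (l.take i)) (l.get ⟨i, h⟩)) →
      (∀ e ∈ l, Odd e.2.2.length) →
      ∀ v ∈ (earsUnion base l).verts, ∃ M : G.Subgraph, M.IsMatching ∧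
        M.verts = (earsUnion base l).verts \ {v} := by
  intro l
  induction l using List.reverseRecOn with
  | nil =>
    intro _ _ v hv
    have he : earsUnion base ([] : List (EarData G)) = base.toSubgraph := rfl
    rw [he, Walk.verts_toSubgraph] at hv ⊢
    exact odd_cycle_matching base hb hob hv
  | append_singleton l e IHl =>
    intro hear hodd v hv
    have hkey : earsUnion base (l ++ [e]) = earsUnion base l ⊔ e.2.2.toSubgraph := by
      simp only [earsUnion, List.foldl_append, List.foldl_cons, List.foldl_nil]
    have hIH := IHl
      (fun i h => by
        have h' : i < (l ++ [e]).length := by simp; omega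
        have hg : (l ++ [e]).get ⟨i, h'⟩ = l.get ⟨i, h⟩ := by
          simp [List.getElem_append_left h]
        have := hear i h'
        rwa [List.take_append_of_le_length (le_of_lt h), hg] at this)
      (fun e' he' => hodd e' (List.mem_append_left _ he'))
    have hee : IsEar (earsUnion base l) e := by
      have h' : l.length < (l ++ [e]).length := by simp
      have hg : (l ++ [e]).get ⟨l.length, h'⟩ = e := by simp
      have := hear l.length h'
      rwa [List.take_left, hg] at this
    obtain ⟨hpath, hne, haH, hbH, hint, -⟩ := hee
    rw [hkey, Subgraph.verts_sup, Walk.verts_toSubgraph] at hv ⊢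
    exact ear_step e.2.2 hpath hne haH hbH hint (hodd e (List.mem_append_right _ (by simp))) hIH v hv

/-- a 2-connected graph with an odd ear-decomposition is
factor-critical. -/
theorem stmt19 {V : Type*} [Fintype V] (G : SimpleGraph V)
    (hG : TwoConnected G) (ed : EarDecomposition G) (hodd : ed.IsOdd) :
    FactorCritical G := by
  classical
  intro v
  have hverts : (earsUnion ed.base ed.ears).verts = Set.univ := by
    rw [ed.union_top]; rfl
  have hv : v ∈ (earsUnion ed.base ed.ears).verts := by rw [hverts]; trivial
  obtain ⟨M, hM, hMv⟩ := ears_good ed.base_cycle hodd.1 ed.ears ed.ear_cond hodd.2 v hv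
  rw [hverts] at hMv
  have hMne : ∀ w ∈ M.verts, w ≠ v := by
    intro w hw; rw [hMv] at hw; exact hw.2
  have hne : ∀ u : ↥(((⊤ : G.Subgraph).deleteVerts {v}).verts), (u : V) ≠ v := by
    intro u
    exact fun h => u.2.2 h
  refine ⟨⟨Set.univ, fun u w => M.Adj u.1 w.1, ?_, fun _ => Set.mem_univ _,
    ⟨fun u w h => M.adj_symm h⟩⟩, ?_, fun _ => trivial⟩
  · intro u w h
    show (((⊤ : G.Subgraph).deleteVerts {v})).Adj u.1 w.1
    rw [Subgraph.deleteVerts_adj]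
    exact ⟨trivial, fun hh => hne u hh, trivial, fun hh => hne w hh, M.adj_sub h⟩
  · intro u _
    have hu' : (u : V) ∈ M.verts := by
      rw [hMv]; exact ⟨trivial, fun h => hne u h⟩
    obtain ⟨w, hw, huniq⟩ := hM hu'
    have hwv : w ∈ M.verts := M.edge_vert (M.adj_symm hw)
    exact ⟨⟨w, ⟨trivial, fun h => hMne w hwv h⟩⟩, hw,
      fun y hy => Subtype.ext (huniq y.1 hy)⟩
end
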